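/- arXiv:2408.15437 — 8 statements merged into one kernel-verified Lean document; each statement's English description precedes it below -/
import Mathlib

section
/- Let d ∈ ℕ and Ξ : ℝ^d → [0,1] be measurable with: supp Ξ ⊆ [−1,1]^d, ∫ Ξ dz = 1, ∑_{k∈ℤ^d} Ξ(z−k) = 1 for all z, and ∫ Ξ² dz > 1/2. Set c := 2∫Ξ² dz − 1 and A_{k,l} := ∫ Ξ(z−k)Ξ(z−l) dz for k,l ∈ ℤ^d. Then for every finitely supported family (λ_k)_{k∈ℤ^d} of reals, ∑_{k,l} λ_k A_{k,l} λ_l ≥ c ∑_k λ_k². -/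
open MeasureTheory

private lemma aux_integrable {d : ℕ} {f : (Fin d → ℝ) → ℝ} (hm : Measurable f)
    (h0 : ∀ z, 0 ≤ f z) (h1 : ∀ z, f z ≤ 1)
    {a b : Fin d → ℝ} (hs : Function.support f ⊆ Set.Icc a b) :
    Integrable f := by
  have hzero : ∀ z, z ∉ Set.Icc a b → f z = 0 := by
    intro z hz; by_contra h; exact hz (hs h)
  refine Integrable.mono' (g := (Set.Icc a b).indicator (fun _ => (1:ℝ)))
    ?_ hm.aestronglyMeasurable (Filter.Eventually.of_forall ?_)
  · rw [integrable_indicator_iff measurableSet_Icc]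
    exact integrableOn_const isCompact_Icc.measure_lt_top.ne
  · intro z
    rw [Real.norm_eq_abs, abs_of_nonneg (h0 z)]
    by_cases hz : z ∈ Set.Icc a b
    · rw [Set.indicator_of_mem hz]; exact h1 z
    · rw [Set.indicator_of_notMem hz, hzero z hz]

private lemma gram_main {d : ℕ} (Ξ : (Fin d → ℝ) → ℝ)
    (hmeas : Measurable Ξ) (h0 : ∀ z, 0 ≤ Ξ z) (h1 : ∀ z, Ξ z ≤ 1)
    (hΞint : Integrable Ξ)
    (hint : ∫ z : Fin d → ℝ, Ξ z = 1)
    (hpart : ∀ z : Fin d → ℝ, ∑' k : Fin d → ℤ, Ξ (fun i => z i - (k i : ℝ)) = 1)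
    (lam : (Fin d → ℤ) → ℝ) (hfin : (Function.support lam).Finite) :
    (2 * (∫ z : Fin d → ℝ, (Ξ z) ^ 2) - 1) * ∑' k : Fin d → ℤ, (lam k) ^ 2 ≤
      ∑' k : Fin d → ℤ, ∑' l : Fin d → ℤ,
        lam k * (∫ z : Fin d → ℝ,
          Ξ (fun i => z i - (k i : ℝ)) * Ξ (fun i => z i - (l i : ℝ))) * lam l := by
  classical
  set T : (Fin d → ℤ) → (Fin d → ℝ) → ℝ := fun k z => Ξ (fun i => z i - (k i : ℝ)) with hTdef
  have hT0 : ∀ k z, 0 ≤ T k z := fun k z => h0 _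
  have hT1 : ∀ k z, T k z ≤ 1 := fun k z => h1 _
  have hTint : ∀ k, Integrable (T k) := by
    intro k
    have : T k = fun z => Ξ (z - fun i => (k i : ℝ)) := rfl
    rw [this]
    exact hΞint.comp_sub_right _
  have hTmeas : ∀ k, Measurable (T k) := by
    intro k
    have : T k = fun z => Ξ (z - fun i => (k i : ℝ)) := rfl
    rw [this]
    exact hmeas.comp (measurable_id.sub measurable_const)
  have hTintegral : ∀ k, (∫ z, T k z) = 1 := by
    intro k
    have : (∫ z, T k z) = ∫ z, Ξ z := integral_sub_right_eq_self Ξ _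
    rw [this, hint]
  set A : (Fin d → ℤ) → (Fin d → ℤ) → ℝ := fun k l => ∫ z, T k z * T l z with hAdef
  have hA_nonneg : ∀ k l, 0 ≤ A k l := fun k l =>
    integral_nonneg (fun z => mul_nonneg (hT0 k z) (hT0 l z))
  have hAint : ∀ k l, Integrable (fun z => T k z * T l z) := by
    intro k l
    refine (hTint k).mono' (((hTmeas k).mul (hTmeas l)).aestronglyMeasurable)
      (Filter.Eventually.of_forall fun z => ?_)
    rw [Real.norm_eq_abs, abs_of_nonneg (mul_nonneg (hT0 k z) (hT0 l z))]
    calc T k z * T l z ≤ T k z * 1 := mul_le_mul_of_nonneg_left (hT1 l z) (hT0 k z)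
      _ = T k z := mul_one _
  have hA_symm : ∀ k l, A k l = A l k := by
    intro k l
    simp only [hAdef]
    congr 1; funext z; ring
  have hsummable : ∀ z, Summable (fun l : Fin d → ℤ => T l z) := by
    intro z
    by_contra h
    have h2 : (∑' l, T l z) = 1 := hpart z
    rw [tsum_eq_zero_of_not_summable h] at h2
    norm_num at h2
  have hpartial : ∀ (F : Finset (Fin d → ℤ)) z, ∑ l ∈ F, T l z ≤ 1 := by
    intro F z
    calc ∑ l ∈ F, T l z ≤ ∑' l, T l z := Summable.sum_le_tsum F (fun l _ => hT0 l z) (hsummable z)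
      _ = 1 := hpart z
  have hrow : ∀ k (F : Finset (Fin d → ℤ)), ∑ l ∈ F, A k l ≤ 1 := by
    intro k F
    have e1 : ∑ l ∈ F, A k l = ∫ z, ∑ l ∈ F, T k z * T l z :=
      (integral_finset_sum F (fun l _ => hAint k l)).symm
    rw [e1]
    calc (∫ z, ∑ l ∈ F, T k z * T l z) ≤ ∫ z, T k z := by
          refine integral_mono (integrable_finset_sum F (fun l _ => hAint k l)) (hTint k) ?_
          intro z
          show ∑ l ∈ F, T k z * T l z ≤ T k z
          rw [← Finset.mul_sum]
          calc T k z * ∑ l ∈ F, T l z ≤ T k z * 1 :=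
                mul_le_mul_of_nonneg_left (hpartial F z) (hT0 k z)
            _ = T k z := mul_one _
      _ = 1 := hTintegral k
  set a : ℝ := ∫ z, (Ξ z) ^ 2 with hadef
  have hdiag : ∀ k, A k k = a := by
    intro k
    have h2 : A k k = ∫ z, (fun w => (Ξ w) ^ 2) (z - fun i => (k i : ℝ)) := by
      simp only [hAdef]
      congr 1; funext z; rw [pow_two]; rfl
    rw [h2, integral_sub_right_eq_self (fun w => (Ξ w) ^ 2) _]
  set s := hfin.toFinset with hsdef
  have hlam0 : ∀ k, k ∉ s → lam k = 0 := by
    intro k hk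
    by_contra h
    exact hk (hfin.mem_toFinset.2 h)
  -- reduce tsums to finite sums
  have hLHS : (∑' k, (lam k) ^ 2) = ∑ k ∈ s, (lam k) ^ 2 :=
    tsum_eq_sum (fun k hk => by rw [hlam0 k hk]; ring)
  have hinner : ∀ k, (∑' l, lam k * A k l * lam l) = ∑ l ∈ s, lam k * A k l * lam l :=
    fun k => tsum_eq_sum (fun l hl => by rw [hlam0 l hl, mul_zero])
  have hRHS : (∑' k, ∑' l, lam k * A k l * lam l)
      = ∑ k ∈ s, ∑ l ∈ s, lam k * A k l * lam l := by
    rw [tsum_congr hinner]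
    exact tsum_eq_sum (fun k hk => Finset.sum_eq_zero (fun l _ => by
      rw [hlam0 k hk]; ring))
  show (2 * a - 1) * ∑' k, (lam k) ^ 2 ≤ ∑' k, ∑' l, lam k * A k l * lam l
  rw [hLHS, hRHS]
  set S : ℝ := ∑ k ∈ s, (lam k) ^ 2 with hSdef
  -- split diagonal
  have hsplit : ∀ k ∈ s, ∑ l ∈ s, lam k * A k l * lam l
      = a * (lam k) ^ 2 + ∑ l ∈ s.erase k, lam k * A k l * lam l := by
    intro k hk
    rw [← Finset.add_sum_erase s _ hk, hdiag k]
    ring_nf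
  have hrow' : ∀ k ∈ s, ∑ l ∈ s.erase k, A k l ≤ 1 - a := by
    intro k hk
    have := hrow k s
    rw [← Finset.add_sum_erase s _ hk, hdiag k] at this
    linarith
  -- bound off-diagonal part
  have hE1 : ∀ k ∈ s, ∑ l ∈ s.erase k, (lam k) ^ 2 * A k l ≤ (1 - a) * (lam k) ^ 2 := by
    intro k hk
    rw [← Finset.mul_sum]
    calc (lam k) ^ 2 * ∑ l ∈ s.erase k, A k l ≤ (lam k) ^ 2 * (1 - a) :=
          mul_le_mul_of_nonneg_left (hrow' k hk) (sq_nonneg _)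
      _ = (1 - a) * (lam k) ^ 2 := mul_comm _ _
  have hswap : (∑ k ∈ s, ∑ l ∈ s.erase k, (lam l) ^ 2 * A k l)
      = ∑ l ∈ s, ∑ k ∈ s.erase l, (lam l) ^ 2 * A k l := by
    refine Finset.sum_comm' ?_
    intro k l
    simp only [Finset.mem_erase]
    constructor
    · rintro ⟨hk, hne, hl⟩
      exact ⟨⟨Ne.symm hne, hk⟩, hl⟩
    · rintro ⟨⟨hne, hk⟩, hl⟩
      exact ⟨hk, Ne.symm hne, hl⟩
  have hE2 : (∑ k ∈ s, ∑ l ∈ s.erase k, (lam l) ^ 2 * A k l) ≤ (1 - a) * S := by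
    rw [hswap]
    calc (∑ l ∈ s, ∑ k ∈ s.erase l, (lam l) ^ 2 * A k l)
        ≤ ∑ l ∈ s, (1 - a) * (lam l) ^ 2 := by
          refine Finset.sum_le_sum (fun l hl => ?_)
          rw [← Finset.mul_sum]
          have : ∑ k ∈ s.erase l, A k l = ∑ k ∈ s.erase l, A l k :=
            Finset.sum_congr rfl (fun k _ => hA_symm k l)
          rw [this]
          calc (lam l) ^ 2 * ∑ k ∈ s.erase l, A l k ≤ (lam l) ^ 2 * (1 - a) :=
                mul_le_mul_of_nonneg_left (hrow' l hl) (sq_nonneg _)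
            _ = (1 - a) * (lam l) ^ 2 := mul_comm _ _
      _ = (1 - a) * S := by rw [hSdef, Finset.mul_sum]
  have hE1sum : (∑ k ∈ s, ∑ l ∈ s.erase k, (lam k) ^ 2 * A k l) ≤ (1 - a) * S := by
    calc (∑ k ∈ s, ∑ l ∈ s.erase k, (lam k) ^ 2 * A k l)
        ≤ ∑ k ∈ s, (1 - a) * (lam k) ^ 2 := Finset.sum_le_sum hE1
      _ = (1 - a) * S := by rw [hSdef, Finset.mul_sum]
  have hRlow : -( (1 - a) * S) ≤ ∑ k ∈ s, ∑ l ∈ s.erase k, lam k * A k l * lam l := by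
    have hterm : ∀ k l, -(((lam k) ^ 2 * A k l + (lam l) ^ 2 * A k l) / 2)
        ≤ lam k * A k l * lam l := by
      intro k l
      nlinarith [hA_nonneg k l, sq_nonneg (lam k + lam l), sq_nonneg (lam k - lam l)]
    calc -((1 - a) * S)
        ≤ -((∑ k ∈ s, ∑ l ∈ s.erase k, (lam k) ^ 2 * A k l
            + ∑ k ∈ s, ∑ l ∈ s.erase k, (lam l) ^ 2 * A k l) / 2) := by
          linarith [hE1sum, hE2]
      _ = ∑ k ∈ s, ∑ l ∈ s.erase k,
            (-(((lam k) ^ 2 * A k l + (lam l) ^ 2 * A k l) / 2)) := by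
          have hadd : (∑ k ∈ s, ∑ l ∈ s.erase k, ((lam k) ^ 2 * A k l + (lam l) ^ 2 * A k l))
              = (∑ k ∈ s, ∑ l ∈ s.erase k, (lam k) ^ 2 * A k l)
                + ∑ k ∈ s, ∑ l ∈ s.erase k, (lam l) ^ 2 * A k l := by
            rw [← Finset.sum_add_distrib]
            exact Finset.sum_congr rfl (fun k _ => Finset.sum_add_distrib)
          rw [← hadd]
          simp only [Finset.sum_neg_distrib, Finset.sum_div]
      _ ≤ ∑ k ∈ s, ∑ l ∈ s.erase k, lam k * A k l * lam l :=
          Finset.sum_le_sum (fun k _ => Finset.sum_le_sum (fun l _ => hterm k l))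
  have hmain : (∑ k ∈ s, ∑ l ∈ s, lam k * A k l * lam l)
      = a * S + ∑ k ∈ s, ∑ l ∈ s.erase k, lam k * A k l * lam l := by
    rw [Finset.sum_congr rfl hsplit, Finset.sum_add_distrib, hSdef, Finset.mul_sum]
  rw [hmain]
  linarith

/-- Lemma 2.4 (ellipticity of the Gram matrix): if `Ξ : ℝ^d → [0,1]` is measurable,
supported in `[−1,1]^d`, has unit integral, its integer shifts form a partition of unity,
and `∫ Ξ² > 1/2`, then the Gram matrix `A_{k,l} = ∫ Ξ(z−k)Ξ(z−l) dz` satisfies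
`∑_{k,l} λ_k A_{k,l} λ_l ≥ (2∫Ξ² − 1) ∑_k λ_k²` for all finitely supported `λ`. -/
theorem gram_matrix_lower_bound (d : ℕ) (Ξ : (Fin d → ℝ) → ℝ)
    (hmeas : Measurable Ξ) (h01 : ∀ z, Ξ z ∈ Set.Icc (0 : ℝ) 1)
    (hsupp : Function.support Ξ ⊆ Set.Icc (fun _ => (-1 : ℝ)) (fun _ => (1 : ℝ)))
    (hint : ∫ z : Fin d → ℝ, Ξ z = 1)
    (hpart : ∀ z : Fin d → ℝ, ∑' k : Fin d → ℤ, Ξ (fun i => z i - (k i : ℝ)) = 1)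
    (hsq : 1 / 2 < ∫ z : Fin d → ℝ, (Ξ z) ^ 2)
    (lam : (Fin d → ℤ) → ℝ) (hfin : (Function.support lam).Finite) :
    (2 * (∫ z : Fin d → ℝ, (Ξ z) ^ 2) - 1) * ∑' k : Fin d → ℤ, (lam k) ^ 2 ≤
      ∑' k : Fin d → ℤ, ∑' l : Fin d → ℤ,
        lam k * (∫ z : Fin d → ℝ,
          Ξ (fun i => z i - (k i : ℝ)) * Ξ (fun i => z i - (l i : ℝ))) * lam l :=
  gram_main Ξ hmeas (fun z => (h01 z).1) (fun z => (h01 z).2)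
    (aux_integrable hmeas (fun z => (h01 z).1) (fun z => (h01 z).2) hsupp)
    hint hpart lam hfin
end

section
/- Let Ξ : ℝ^d → [0,1] satisfy: supp Ξ ⊆ [−1,1]^d, ∫Ξ dz = 1, ∑_{k∈ℤ^d} Ξ(z−k) = 1 for all z, and ∫Ξ² dz > 1/2. Let G ⊆ ℤ^d be finite and N ∈ ℕ. Then for every y ∈ ℝ^G, with c := 2∫Ξ²dz − 1, one has (c/N^d) ∑_{p∈G} y_p² ≤ ‖∑_{p∈G} y_p Ξ(N·−p)‖²_{L²(ℝ^d)} ≤ (3^d/N^d) ∑_{p∈G} y_p². -/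
open MeasureTheory

set_option maxHeartbeats 1000000

lemma hmnb_plane {d : ℕ} (i : Fin d) (c : ℝ) :
    (volume : Measure (Fin d → ℝ)) {z | z i = c} = 0 := by
  have h : {z : Fin d → ℝ | z i = c} = Set.univ.pi (fun j => if j = i then {c} else Set.univ) := by
    ext z
    simp only [Set.mem_setOf_eq, Set.mem_pi, Set.mem_univ, forall_true_left]
    constructor
    · intro h j; by_cases hj : j = i <;> simp [hj, h]
    · intro h; have := h i; simpa using this
  rw [h, volume_pi_pi]
  exact Finset.prod_eq_zero (Finset.mem_univ i) (by simp)

/-- Proposition 2.5: norm equivalence for the height map. For `Ξ` satisfying the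
partition-of-unity condition and any finite set `G ⊆ ℤ^d` of grid points,
`(c/N^d) ∑ y_p² ≤ ‖∑_p y_p Ξ(N·−p)‖²_{L²} ≤ (3^d/N^d) ∑ y_p²` with `c = 2∫Ξ² − 1`. -/
theorem height_map_norm_bounds (d : ℕ) (Ξ : (Fin d → ℝ) → ℝ)
    (hmeas : Measurable Ξ) (h01 : ∀ z, Ξ z ∈ Set.Icc (0 : ℝ) 1)
    (hsupp : Function.support Ξ ⊆ Set.Icc (fun _ => (-1 : ℝ)) (fun _ => (1 : ℝ)))
    (hint : ∫ z : Fin d → ℝ, Ξ z = 1)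
    (hpart : ∀ z : Fin d → ℝ, ∑' k : Fin d → ℤ, Ξ (fun i => z i - (k i : ℝ)) = 1)
    (hsq : 1 / 2 < ∫ z : Fin d → ℝ, (Ξ z) ^ 2)
    (G : Finset (Fin d → ℤ)) (N : ℕ) (hN : 0 < N) (y : (Fin d → ℤ) → ℝ) :
    ((2 * (∫ z : Fin d → ℝ, (Ξ z) ^ 2) - 1) / (N : ℝ) ^ d) * ∑ p ∈ G, (y p) ^ 2 ≤
        (∫ z : Fin d → ℝ, (∑ p ∈ G, y p * Ξ (fun i => (N : ℝ) * z i - (p i : ℝ))) ^ 2) ∧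
      (∫ z : Fin d → ℝ, (∑ p ∈ G, y p * Ξ (fun i => (N : ℝ) * z i - (p i : ℝ))) ^ 2) ≤
        ((3 : ℝ) ^ d / (N : ℝ) ^ d) * ∑ p ∈ G, (y p) ^ 2 := by
  classical
  have hΞ0 : ∀ z, 0 ≤ Ξ z := fun z => (h01 z).1
  have hΞ1 : ∀ z, Ξ z ≤ 1 := fun z => (h01 z).2
  set c : (Fin d → ℤ) → (Fin d → ℝ) := fun k i => (k i : ℝ) with hc
  -- basic integrability
  have hXiInt : Integrable Ξ := by
    have hind : Integrable ((Set.Icc (fun _ => (-1:ℝ)) (fun _ => (1:ℝ)) : Set (Fin d → ℝ)).indicator (fun _ => (1:ℝ))) := by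
      rw [integrable_indicator_iff measurableSet_Icc]
      exact integrableOn_const (IsCompact.measure_lt_top isCompact_Icc).ne
    refine hind.mono' hmeas.aestronglyMeasurable (ae_of_all _ fun z => ?_)
    rw [Real.norm_eq_abs, abs_of_nonneg (hΞ0 z)]
    by_cases hz : z ∈ Function.support Ξ
    · rw [Set.indicator_of_mem (hsupp hz)]; exact hΞ1 z
    · simp only [Function.mem_support, not_not] at hz
      rw [hz]; exact Set.indicator_apply_nonneg (fun _ => zero_le_one)
  have hmeas_shift : ∀ a : Fin d → ℝ, Measurable fun z : Fin d → ℝ => Ξ (z - a) :=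
    fun a => hmeas.comp (measurable_id.sub measurable_const)
  have hprodInt : ∀ b : Fin d → ℝ, Integrable fun z => Ξ z * Ξ (z - b) := by
    intro b
    refine hXiInt.mono' (hmeas.mul (hmeas_shift b)).aestronglyMeasurable (ae_of_all _ fun z => ?_)
    rw [Real.norm_eq_abs, abs_of_nonneg (mul_nonneg (hΞ0 z) (hΞ0 _))]
    calc Ξ z * Ξ (z - b) ≤ Ξ z * 1 := by
          have := hΞ0 z; nlinarith [hΞ1 (z - b), hΞ0 (z - b)]
      _ = Ξ z := mul_one _
  set A : (Fin d → ℤ) → ℝ := fun k => ∫ z : Fin d → ℝ, Ξ z * Ξ (z - c k) with hA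
  have hAnonneg : ∀ k, 0 ≤ A k :=
    fun k => integral_nonneg fun z => mul_nonneg (hΞ0 z) (hΞ0 _)
  have hA0 : A 0 = ∫ z : Fin d → ℝ, (Ξ z) ^ 2 := by
    have hc0 : c 0 = 0 := by funext i; simp [hc]
    simp only [hA, hc0, sub_zero, sq]
  have hAle : ∀ k, A k ≤ 1 := by
    intro k
    calc A k ≤ ∫ z : Fin d → ℝ, Ξ z := by
          refine integral_mono (hprodInt (c k)) hXiInt fun z => ?_
          nlinarith [hΞ0 z, hΞ1 (z - c k), hΞ0 (z - c k)]
      _ = 1 := hint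
  -- A vanishes for far-away lattice points
  have hAzero : ∀ k : Fin d → ℤ, (∃ i, 1 < |k i|) → A k = 0 := by
    rintro k ⟨i, hi⟩
    have h2 : 2 ≤ k i ∨ k i ≤ -2 := by rcases abs_cases (k i) with ⟨he, _⟩ | ⟨he, _⟩ <;> omega
    set v : ℝ := if 2 ≤ k i then 1 else -1 with hv
    apply integral_eq_zero_of_ae
    rw [Filter.EventuallyEq, ae_iff]
    refine measure_mono_null ?_ (hmnb_plane i v)
    intro z hz
    simp only [Set.mem_setOf_eq, Pi.zero_apply] at hz ⊢
    rcases mul_ne_zero_iff.1 hz with ⟨h1, h2'⟩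
    have hz1 := hsupp (Function.mem_support.2 h1)
    have hz2 := hsupp (Function.mem_support.2 h2')
    rw [Set.mem_Icc] at hz1 hz2
    have hzu : z i ≤ 1 := hz1.2 i
    have hzl : -1 ≤ z i := hz1.1 i
    have hzu2 : z i - (k i : ℝ) ≤ 1 := hz2.2 i
    have hzl2 : -1 ≤ z i - (k i : ℝ) := hz2.1 i
    rcases h2 with h | h
    · have : (2 : ℝ) ≤ (k i : ℝ) := by exact_mod_cast h
      have : z i = 1 := by linarith
      simp [hv, h, this]
    · have : ((k i : ℝ)) ≤ -2 := by exact_mod_cast h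
      have hki : ¬ (2 ≤ k i) := by omega
      have : z i = -1 := by linarith
      simp [hv, hki, this]
  -- summability of the partition
  have hsub_eq : ∀ (z : Fin d → ℝ) (k : Fin d → ℤ), z - c k = fun i => z i - (k i : ℝ) := by
    intro z k; funext i; simp [hc]
  have hSummXi : ∀ z : Fin d → ℝ, Summable fun k : Fin d → ℤ => Ξ (z - c k) := by
    intro z
    by_contra h
    have h1 := hpart z
    have h2 : ¬ Summable fun k : Fin d → ℤ => Ξ (fun i => z i - (k i : ℝ)) := by
      intro h'; exact h (h'.congr fun k => by rw [hsub_eq])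
    rw [tsum_eq_zero_of_not_summable h2] at h1
    exact zero_ne_one h1
  have hpart' : ∀ z : Fin d → ℝ, ∑' k : Fin d → ℤ, Ξ (z - c k) = 1 := by
    intro z
    rw [tsum_congr (fun k => by rw [hsub_eq z k])]
    exact hpart z
  -- tsum of A equals 1, via lintegral
  have hofReal : ∀ k, ENNReal.ofReal (A k) = ∫⁻ z : Fin d → ℝ, ENNReal.ofReal (Ξ z * Ξ (z - c k)) :=
    fun k => ofReal_integral_eq_lintegral_ofReal (hprodInt (c k))
      (ae_of_all _ fun z => mul_nonneg (hΞ0 z) (hΞ0 _))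
  have hts : ∑' k : Fin d → ℤ, ENNReal.ofReal (A k) = 1 := by
    calc ∑' k : Fin d → ℤ, ENNReal.ofReal (A k)
        = ∑' k : Fin d → ℤ, ∫⁻ z : Fin d → ℝ, ENNReal.ofReal (Ξ z * Ξ (z - c k)) :=
          tsum_congr fun k => hofReal k
      _ = ∫⁻ z : Fin d → ℝ, ∑' k : Fin d → ℤ, ENNReal.ofReal (Ξ z * Ξ (z - c k)) :=
          (lintegral_tsum fun k =>
            ((hmeas.mul (hmeas_shift (c k))).ennreal_ofReal).aemeasurable).symm
      _ = ∫⁻ z : Fin d → ℝ, ENNReal.ofReal (Ξ z) := by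
          refine lintegral_congr fun z => ?_
          calc ∑' k : Fin d → ℤ, ENNReal.ofReal (Ξ z * Ξ (z - c k))
              = ∑' k : Fin d → ℤ, ENNReal.ofReal (Ξ z) * ENNReal.ofReal (Ξ (z - c k)) :=
                tsum_congr fun k => ENNReal.ofReal_mul (hΞ0 z)
            _ = ENNReal.ofReal (Ξ z) * ∑' k : Fin d → ℤ, ENNReal.ofReal (Ξ (z - c k)) :=
                ENNReal.tsum_mul_left
            _ = ENNReal.ofReal (Ξ z) * ENNReal.ofReal (∑' k : Fin d → ℤ, Ξ (z - c k)) := by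
                rw [ENNReal.ofReal_tsum_of_nonneg (fun k => hΞ0 _) (hSummXi z)]
            _ = ENNReal.ofReal (Ξ z) := by rw [hpart' z, ENNReal.ofReal_one, mul_one]
      _ = ENNReal.ofReal (∫ z : Fin d → ℝ, Ξ z) :=
          (ofReal_integral_eq_lintegral_ofReal hXiInt (ae_of_all _ hΞ0)).symm
      _ = 1 := by rw [hint, ENNReal.ofReal_one]
  have hAsumm : Summable A := by
    have h1 : Summable fun k : Fin d → ℤ => (ENNReal.ofReal (A k)).toReal :=
      ENNReal.summable_toReal (by rw [hts]; exact ENNReal.one_ne_top)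
    exact h1.congr fun k => ENNReal.toReal_ofReal (hAnonneg k)
  have htsumA : ∑' k : Fin d → ℤ, A k = 1 := by
    have h1 : ∑' k : Fin d → ℤ, A k
        = ∑' k : Fin d → ℤ, (ENNReal.ofReal (A k)).toReal :=
      tsum_congr fun k => (ENNReal.toReal_ofReal (hAnonneg k)).symm
    rw [h1, ← ENNReal.tsum_toReal_eq (fun k => ENNReal.ofReal_ne_top), hts, ENNReal.toReal_one]
  have hfinsum : ∀ s : Finset (Fin d → ℤ), ∑ k ∈ s, A k ≤ 1 := fun s =>
    (Summable.sum_le_tsum s (fun k _ => hAnonneg k) hAsumm).trans htsumA.le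
  -- counting: A vanishes off S, |S| = 3^d
  set S : Finset (Fin d → ℤ) := Fintype.piFinset fun _ : Fin d => ({-1, 0, 1} : Finset ℤ) with hS
  have hScard : (S.card : ℝ) = 3 ^ d := by
    rw [hS, Fintype.card_piFinset]
    simp
  have hAnotS : ∀ k : Fin d → ℤ, k ∉ S → A k = 0 := by
    intro k hk
    apply hAzero
    rw [hS, Fintype.mem_piFinset] at hk
    push_neg at hk
    obtain ⟨i, hi⟩ := hk
    refine ⟨i, ?_⟩
    simp only [Finset.mem_insert, Finset.mem_singleton] at hi
    push_neg at hi
    rcases abs_cases (k i) with ⟨he, _⟩ | ⟨he, _⟩ <;> omega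
  -- row and column bounds
  have hbound : ∀ (t : Finset (Fin d → ℤ)) (f : (Fin d → ℤ) → (Fin d → ℤ))
      (hf : Set.InjOn f t), ∑ q ∈ t, A (f q) ≤ ∑ k ∈ S ∪ t.image f, A k := by
    intro t f hf
    rw [← Finset.sum_image (fun a ha b hb => hf ha hb)]
    exact Finset.sum_le_sum_of_subset_of_nonneg Finset.subset_union_right
      (fun k _ _ => hAnonneg k)
  have hrowcol : ∀ (t : Finset (Fin d → ℤ)) (f : (Fin d → ℤ) → (Fin d → ℤ)),
      Set.InjOn f t → ∑ q ∈ t, A (f q) ≤ 3 ^ d := by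
    intro t f hf
    have h1 : ∑ q ∈ t, A (f q) = ∑ q ∈ t.filter (fun q => f q ∈ S), A (f q) := by
      rw [Finset.sum_filter_of_ne]
      intro q _ hq
      by_contra hns
      exact hq (hAnotS _ hns)
    rw [h1, ← Finset.sum_image (fun a ha b hb =>
      hf (Finset.mem_filter.1 ha).1 (Finset.mem_filter.1 hb).1)]
    have hsub : (t.filter (fun q => f q ∈ S)).image f ⊆ S := by
      intro k hk
      obtain ⟨q, hq, rfl⟩ := Finset.mem_image.1 hk
      exact (Finset.mem_filter.1 hq).2
    calc ∑ k ∈ (t.filter (fun q => f q ∈ S)).image f, A k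
        ≤ ∑ k ∈ S, A k := Finset.sum_le_sum_of_subset_of_nonneg hsub (fun k _ _ => hAnonneg k)
      _ ≤ ∑ _k ∈ S, (1:ℝ) := Finset.sum_le_sum fun k _ => hAle k
      _ = (S.card : ℝ) := by simp
      _ = 3 ^ d := hScard
  have hrow : ∀ p, ∑ q ∈ G, A (q - p) ≤ 3 ^ d := fun p =>
    hrowcol G (· - p) (fun a _ b _ h => by simpa using sub_left_injective h)
  have hcol : ∀ q, ∑ p ∈ G, A (q - p) ≤ 3 ^ d := fun q =>
    hrowcol G (q - ·) (fun a _ b _ h => by simpa using sub_right_injective h)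
  -- off-diagonal bounds
  have herased : ∀ (f : (Fin d → ℤ) → (Fin d → ℤ)) (t : Finset (Fin d → ℤ)),
      Set.InjOn f t → (∀ q ∈ t, f q ≠ 0) → ∑ q ∈ t, A (f q) ≤ 1 - A 0 := by
    intro f t hf h0
    have h1 : ∑ q ∈ t, A (f q) = ∑ k ∈ t.image f, A k :=
      (Finset.sum_image (fun a ha b hb => hf ha hb)).symm
    have h2 : (0 : Fin d → ℤ) ∉ t.image f := by
      intro h
      obtain ⟨q, hq, hq0⟩ := Finset.mem_image.1 h
      exact h0 q hq hq0
    have h3 : A 0 + ∑ k ∈ t.image f, A k = ∑ k ∈ insert 0 (t.image f), A k :=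
      (Finset.sum_insert h2).symm
    have h4 := hfinsum (insert 0 (t.image f))
    rw [← h3] at h4
    linarith [h1 ▸ h4]
  have hrow' : ∀ p ∈ G, ∑ q ∈ G.erase p, A (q - p) ≤ 1 - A 0 := by
    intro p _
    refine herased (· - p) _ (fun a _ b _ h => by simpa using sub_left_injective h) ?_
    intro q hq
    simpa [sub_eq_zero] using (Finset.mem_erase.1 hq).1
  have hcol' : ∀ q ∈ G, ∑ p ∈ G.erase q, A (q - p) ≤ 1 - A 0 := by
    intro q _
    refine herased (q - ·) _ (fun a _ b _ h => by simpa using sub_right_injective h) ?_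
    intro p hp h
    exact (Finset.mem_erase.1 hp).1 (sub_eq_zero.1 h).symm
  -- the scaled bump functions
  set φ : (Fin d → ℤ) → (Fin d → ℝ) → ℝ :=
    fun p z => Ξ (fun i => (N : ℝ) * z i - (p i : ℝ)) with hφ
  have hNne : (N : ℝ) ≠ 0 := Nat.cast_ne_zero.2 hN.ne'
  have hφsmul : ∀ p z, φ p z = Ξ ((N : ℝ) • z - c p) := by
    intro p z
    show Ξ (fun i => (N : ℝ) * z i - (p i : ℝ)) = Ξ ((N : ℝ) • z - c p)
    have he : (fun i => (N : ℝ) * z i - (p i : ℝ)) = ((N : ℝ) • z - c p) := by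
      funext i; simp [hc, Pi.smul_apply, smul_eq_mul]
    rw [he]
  have hφmeas : ∀ p, Measurable (φ p) := by
    intro p
    apply hmeas.comp
    exact measurable_pi_lambda _ fun i =>
      ((measurable_pi_apply i).const_mul _).sub measurable_const
  have hφ01 : ∀ p z, φ p z ∈ Set.Icc (0:ℝ) 1 := fun p z => h01 _
  have hφint : ∀ p, Integrable (φ p) := by
    intro p
    have h1 : Integrable fun w : Fin d → ℝ => Ξ (w - c p) := hXiInt.comp_sub_right (c p)
    have h2 := (integrable_comp_smul_iff (volume : Measure (Fin d → ℝ))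
      (fun w : Fin d → ℝ => Ξ (w - c p)) hNne).2 h1
    exact h2.congr (ae_of_all _ fun z => (hφsmul p z).symm)
  have hφφint : ∀ p q, Integrable fun z => φ p z * φ q z := by
    intro p q
    refine (hφint p).mono' ((hφmeas p).mul (hφmeas q)).aestronglyMeasurable
      (ae_of_all _ fun z => ?_)
    rw [Real.norm_eq_abs, abs_of_nonneg (mul_nonneg (hφ01 p z).1 (hφ01 q z).1)]
    nlinarith [(hφ01 p z).1, (hφ01 q z).1, (hφ01 q z).2]
  -- the key integral identity
  have hI : ∀ p q : Fin d → ℤ,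
      ∫ z : Fin d → ℝ, φ p z * φ q z = ((N : ℝ) ^ d)⁻¹ * A (q - p) := by
    intro p q
    have hcsub : c q - c p = c (q - p) := by
      funext i; simp [hc, Pi.sub_apply]
    calc ∫ z : Fin d → ℝ, φ p z * φ q z
        = ∫ z : Fin d → ℝ, (fun w => Ξ (w - c p) * Ξ (w - c q)) ((N : ℝ) • z) := by
          refine integral_congr_ae (ae_of_all _ fun z => ?_)
          simp only [hφsmul]
      _ = |(((N : ℝ) ^ Module.finrank ℝ (Fin d → ℝ))⁻¹)| •
            ∫ w : Fin d → ℝ, Ξ (w - c p) * Ξ (w - c q) :=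
          Measure.integral_comp_smul (volume : Measure (Fin d → ℝ))
            (fun w : Fin d → ℝ => Ξ (w - c p) * Ξ (w - c q)) (N : ℝ)
      _ = ((N : ℝ) ^ d)⁻¹ * ∫ w : Fin d → ℝ, Ξ (w - c p) * Ξ (w - c q) := by
          rw [Module.finrank_fin_fun, smul_eq_mul, abs_of_nonneg]
          positivity
      _ = ((N : ℝ) ^ d)⁻¹ * A (q - p) := by
          congr 1
          rw [← integral_add_right_eq_self (fun w : Fin d → ℝ => Ξ (w - c p) * Ξ (w - c q)) (c p)]
          refine integral_congr_ae (ae_of_all _ fun v => ?_)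
          show Ξ (v + c p - c p) * Ξ (v + c p - c q) = Ξ v * Ξ (v - c (q - p))
          rw [add_sub_cancel_right, ← hcsub]
          congr 2
          abel
  -- expansion of the squared integral
  set T : ℝ := ∑ p ∈ G, ∑ q ∈ G, y p * y q * A (q - p) with hT
  have hexp : (∫ z : Fin d → ℝ, (∑ p ∈ G, y p * φ p z) ^ 2) = ((N:ℝ)^d)⁻¹ * T := by
    have hptw : ∀ z, (∑ p ∈ G, y p * φ p z) ^ 2
        = ∑ p ∈ G, ∑ q ∈ G, (y p * y q) * (φ p z * φ q z) := by
      intro z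
      rw [sq, Finset.sum_mul_sum]
      exact Finset.sum_congr rfl fun p _ => Finset.sum_congr rfl fun q _ => by ring
    calc (∫ z : Fin d → ℝ, (∑ p ∈ G, y p * φ p z) ^ 2)
        = ∫ z : Fin d → ℝ, ∑ p ∈ G, ∑ q ∈ G, (y p * y q) * (φ p z * φ q z) :=
          integral_congr_ae (ae_of_all _ fun z => hptw z)
      _ = ∑ p ∈ G, ∫ z : Fin d → ℝ, ∑ q ∈ G, (y p * y q) * (φ p z * φ q z) :=
          integral_finset_sum G fun p _ =>
            integrable_finset_sum G fun q _ => ((hφφint p q).const_mul _)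
      _ = ∑ p ∈ G, ∑ q ∈ G, ∫ z : Fin d → ℝ, (y p * y q) * (φ p z * φ q z) :=
          Finset.sum_congr rfl fun p _ =>
            integral_finset_sum G fun q _ => ((hφφint p q).const_mul _)
      _ = ∑ p ∈ G, ∑ q ∈ G, (y p * y q) * (((N:ℝ)^d)⁻¹ * A (q - p)) := by
          refine Finset.sum_congr rfl fun p _ => Finset.sum_congr rfl fun q _ => ?_
          rw [integral_const_mul, hI p q]
      _ = ((N:ℝ)^d)⁻¹ * T := by
          rw [hT, Finset.mul_sum]
          refine Finset.sum_congr rfl fun p _ => ?_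
          rw [Finset.mul_sum]
          exact Finset.sum_congr rfl fun q _ => by ring
  set R : ℝ := ∑ p ∈ G, (y p)^2 with hR
  have hRnn : 0 ≤ R := Finset.sum_nonneg fun p _ => sq_nonneg _
  -- upper bound for T
  have hTup : T ≤ 3 ^ d * R := by
    have h1 : T ≤ ∑ p ∈ G, ∑ q ∈ G, (y p^2 * A (q-p) / 2 + y q^2 * A (q-p) / 2) := by
      rw [hT]
      refine Finset.sum_le_sum fun p _ => Finset.sum_le_sum fun q _ => ?_
      nlinarith [sq_nonneg (y p - y q), hAnonneg (q - p)]
    have h2 : ∑ p ∈ G, ∑ q ∈ G, (y p^2 * A (q-p) / 2 + y q^2 * A (q-p) / 2)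
        = ∑ p ∈ G, y p^2 * (∑ q ∈ G, A (q-p)) / 2
          + ∑ q ∈ G, y q^2 * (∑ p ∈ G, A (q-p)) / 2 := by
      simp only [Finset.sum_add_distrib]
      congr 1
      · exact Finset.sum_congr rfl fun p _ => by rw [← Finset.sum_div, ← Finset.mul_sum]
      · rw [Finset.sum_comm]
        exact Finset.sum_congr rfl fun q _ => by rw [← Finset.sum_div, ← Finset.mul_sum]
    have h3 : ∑ p ∈ G, y p^2 * (∑ q ∈ G, A (q-p)) / 2 ≤ ∑ p ∈ G, y p^2 * (3^d : ℝ) / 2 :=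
      Finset.sum_le_sum fun p _ => by
        have := mul_le_mul_of_nonneg_left (hrow p) (sq_nonneg (y p)); linarith
    have h4 : ∑ q ∈ G, y q^2 * (∑ p ∈ G, A (q-p)) / 2 ≤ ∑ q ∈ G, y q^2 * (3^d : ℝ) / 2 :=
      Finset.sum_le_sum fun q _ => by
        have := mul_le_mul_of_nonneg_left (hcol q) (sq_nonneg (y q)); linarith
    have h5 : ∑ p ∈ G, y p^2 * (3^d : ℝ) / 2 + ∑ p ∈ G, y p^2 * (3^d : ℝ) / 2
        = 3 ^ d * R := by
      rw [hR, Finset.mul_sum, ← Finset.sum_add_distrib]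
      exact Finset.sum_congr rfl fun p _ => by ring
    linarith
  -- swap lemma for erased double sums
  have hswap : ∀ f : (Fin d → ℤ) → (Fin d → ℤ) → ℝ,
      ∑ p ∈ G, ∑ q ∈ G.erase p, f p q = ∑ q ∈ G, ∑ p ∈ G.erase q, f p q := by
    intro f
    have h1 : ∀ (a : Fin d → ℤ) (g : (Fin d → ℤ) → ℝ),
        ∑ x ∈ G.erase a, g x = ∑ x ∈ G, if x ≠ a then g x else 0 := by
      intro a g
      rw [← Finset.filter_ne' G a, Finset.sum_filter]
    calc ∑ p ∈ G, ∑ q ∈ G.erase p, f p q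
        = ∑ p ∈ G, ∑ q ∈ G, if q ≠ p then f p q else 0 :=
          Finset.sum_congr rfl fun p _ => h1 p (f p)
      _ = ∑ q ∈ G, ∑ p ∈ G, if q ≠ p then f p q else 0 := Finset.sum_comm
      _ = ∑ q ∈ G, ∑ p ∈ G.erase q, f p q := by
          refine Finset.sum_congr rfl fun q _ => ?_
          rw [h1 q (fun p => f p q)]
          exact Finset.sum_congr rfl fun p _ => if_congr ⟨Ne.symm, Ne.symm⟩ rfl rfl
  -- lower bound for T
  have hTlo : (2 * A 0 - 1) * R ≤ T := by
    have hdiag : T = ∑ p ∈ G, y p^2 * A 0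
        + ∑ p ∈ G, ∑ q ∈ G.erase p, y p * y q * A (q - p) := by
      rw [hT, ← Finset.sum_add_distrib]
      refine Finset.sum_congr rfl fun p hp => ?_
      rw [← Finset.add_sum_erase G _ hp]
      congr 1
      rw [sub_self, sq]
    have hinner : ∀ p ∈ G,
        -(y p^2 * (∑ q ∈ G.erase p, A (q-p)) / 2) - ∑ q ∈ G.erase p, y q^2 * A (q-p) / 2
          ≤ ∑ q ∈ G.erase p, y p * y q * A (q-p) := by
      intro p _
      have ha : ∑ q ∈ G.erase p, (-(y p^2 * A (q-p) / 2) - y q^2 * A (q-p) / 2)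
          ≤ ∑ q ∈ G.erase p, y p * y q * A (q-p) :=
        Finset.sum_le_sum fun q _ => by nlinarith [sq_nonneg (y p + y q), hAnonneg (q-p)]
      have hb : ∑ q ∈ G.erase p, (-(y p^2 * A (q-p) / 2) - y q^2 * A (q-p) / 2)
          = -(y p^2 * (∑ q ∈ G.erase p, A (q-p)) / 2)
            - ∑ q ∈ G.erase p, y q^2 * A (q-p) / 2 := by
        rw [Finset.sum_sub_distrib]
        congr 1
        rw [Finset.sum_neg_distrib, ← Finset.sum_div, ← Finset.mul_sum]
      linarith
    have hSI : ∑ p ∈ G, (-(y p^2 * (∑ q ∈ G.erase p, A (q-p)) / 2)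
          - ∑ q ∈ G.erase p, y q^2 * A (q-p) / 2)
        ≤ ∑ p ∈ G, ∑ q ∈ G.erase p, y p * y q * A (q - p) :=
      Finset.sum_le_sum fun p hp => hinner p hp
    have hD1 : ∑ p ∈ G, y p^2 * (∑ q ∈ G.erase p, A (q-p)) / 2
        ≤ R * (1 - A 0) / 2 := by
      have : ∑ p ∈ G, y p^2 * (∑ q ∈ G.erase p, A (q-p)) / 2
          ≤ ∑ p ∈ G, y p^2 * (1 - A 0) / 2 :=
        Finset.sum_le_sum fun p hp => by
          have := mul_le_mul_of_nonneg_left (hrow' p hp) (sq_nonneg (y p)); linarith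
      calc ∑ p ∈ G, y p^2 * (∑ q ∈ G.erase p, A (q-p)) / 2
          ≤ ∑ p ∈ G, y p^2 * (1 - A 0) / 2 := this
        _ = R * (1 - A 0) / 2 := by
            rw [hR, Finset.sum_mul, ← Finset.sum_div]
    have hD2 : ∑ p ∈ G, ∑ q ∈ G.erase p, y q^2 * A (q-p) / 2 ≤ R * (1 - A 0) / 2 := by
      rw [hswap fun p q => y q^2 * A (q-p) / 2]
      have h1 : ∀ q, ∑ p ∈ G.erase q, y q^2 * A (q-p) / 2
          = y q^2 * (∑ p ∈ G.erase q, A (q-p)) / 2 := by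
        intro q
        rw [← Finset.sum_div, ← Finset.mul_sum]
      calc ∑ q ∈ G, ∑ p ∈ G.erase q, y q^2 * A (q-p) / 2
          = ∑ q ∈ G, y q^2 * (∑ p ∈ G.erase q, A (q-p)) / 2 :=
            Finset.sum_congr rfl fun q _ => h1 q
        _ ≤ ∑ q ∈ G, y q^2 * (1 - A 0) / 2 :=
            Finset.sum_le_sum fun q hq => by
              have := mul_le_mul_of_nonneg_left (hcol' q hq) (sq_nonneg (y q)); linarith
        _ = R * (1 - A 0) / 2 := by rw [hR, Finset.sum_mul, ← Finset.sum_div]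
    have hSD : ∑ p ∈ G, y p^2 * A 0 = R * A 0 := by rw [hR, Finset.sum_mul]
    have hsplit : ∑ p ∈ G, (-(y p^2 * (∑ q ∈ G.erase p, A (q-p)) / 2)
          - ∑ q ∈ G.erase p, y q^2 * A (q-p) / 2)
        = -(∑ p ∈ G, y p^2 * (∑ q ∈ G.erase p, A (q-p)) / 2)
          - ∑ p ∈ G, ∑ q ∈ G.erase p, y q^2 * A (q-p) / 2 := by
      rw [Finset.sum_sub_distrib, Finset.sum_neg_distrib]
    rw [hdiag, hSD]
    rw [hsplit] at hSI
    nlinarith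
  -- conclusion
  have hgoalint : (∫ z : Fin d → ℝ, (∑ p ∈ G, y p * φ p z) ^ 2) = ((N:ℝ)^d)⁻¹ * T := hexp
  have hNpos : (0:ℝ) < (N:ℝ)^d := by positivity
  constructor
  · rw [hgoalint, ← hA0]
    calc (2 * A 0 - 1) / (N:ℝ)^d * R = ((N:ℝ)^d)⁻¹ * ((2 * A 0 - 1) * R) := by
          field_simp
      _ ≤ ((N:ℝ)^d)⁻¹ * T := mul_le_mul_of_nonneg_left hTlo (by positivity)
  · rw [hgoalint]
    calc ((N:ℝ)^d)⁻¹ * T ≤ ((N:ℝ)^d)⁻¹ * (3^d * R) :=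
          mul_le_mul_of_nonneg_left hTup (by positivity)
      _ = (3:ℝ)^d / (N:ℝ)^d * R := by field_simp
end

section
/- Let D ⊂ ℝ^d be bounded open, (D_N) increasing sets with G_N = N D_N ∩ ℤ^d, ⋃_N D_N = D up to Lebesgue-null sets, and let Ξ satisfy the partition-of-unity condition (supp Ξ ⊆ [−1,1]^d, ∫Ξ=1, ∑_{k∈ℤ^d}Ξ(·−k)=1, ∫Ξ²>1/2). Then for every φ ∈ C(cl D), lim_{N→∞} ∫_D |∑_{p∈G_N} φ(p/N) Ξ(Nz−p) − φ(z)|² dz = 0. -/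
open MeasureTheory Filter Topology

lemma aux_finsupp (d : ℕ) (Ξ : (Fin d → ℝ) → ℝ)
    (hsupp : Function.support Ξ ⊆ Set.Icc (fun _ => (-1 : ℝ)) (fun _ => (1 : ℝ)))
    (w : Fin d → ℝ) :
    {k : Fin d → ℤ | Ξ (fun i => w i - (k i : ℝ)) ≠ 0}.Finite := by
  apply Set.Finite.subset (Set.Finite.pi (fun i => Set.finite_Icc (⌈w i - 1⌉) (⌊w i + 1⌋)))
  intro k hk
  have h := hsupp hk
  rw [Set.mem_Icc] at h
  have h1 := h.1; have h2 := h.2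
  rw [Pi.le_def] at h1 h2
  rw [Set.mem_pi]
  intro i _
  rw [Set.mem_Icc, Int.ceil_le, Int.le_floor]
  exact ⟨by have := h2 i; simp at this ⊢; linarith, by have := h1 i; simp at this ⊢; linarith⟩

/-- L² approximation of continuous functions by the height-map samples: for every
`φ ∈ C(cl D)`, `∫_D |∑_{p∈G_N} φ(p/N) Ξ(Nz−p) − φ(z)|² dz → 0` as `N → ∞`. -/
theorem height_map_L2_approximation (d : ℕ) (D : Set (Fin d → ℝ))
    (hDopen : IsOpen D) (hDbdd : Bornology.IsBounded D)
    (DN : ℕ → Set (Fin d → ℝ)) (hmono : Monotone DN)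
    (hDNopen : ∀ N, ∃ U : Set (Fin d → ℝ), IsOpen U ∧ DN N = U ∩ closure D)
    (hcover : volume (closure D \ ⋃ N, DN N) = 0)
    (G : ℕ → Finset (Fin d → ℤ))
    (hG : ∀ N (k : Fin d → ℤ), k ∈ G N ↔ (fun i => (k i : ℝ) / (N : ℝ)) ∈ DN N)
    (Ξ : (Fin d → ℝ) → ℝ)
    (hmeas : Measurable Ξ) (h01 : ∀ z, Ξ z ∈ Set.Icc (0 : ℝ) 1)
    (hsupp : Function.support Ξ ⊆ Set.Icc (fun _ => (-1 : ℝ)) (fun _ => (1 : ℝ)))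
    (hint : ∫ z : Fin d → ℝ, Ξ z = 1)
    (hpart : ∀ z : Fin d → ℝ, ∑' k : Fin d → ℤ, Ξ (fun i => z i - (k i : ℝ)) = 1)
    (hsq : 1 / 2 < ∫ z : Fin d → ℝ, (Ξ z) ^ 2)
    (φ : (Fin d → ℝ) → ℝ) (hφ : ContinuousOn φ (closure D)) :
    Tendsto (fun N : ℕ =>
        ∫ z in D, (∑ p ∈ G N, φ (fun i => (p i : ℝ) / (N : ℝ)) *
          Ξ (fun i => (N : ℝ) * z i - (p i : ℝ)) - φ z) ^ 2)
      atTop (𝓝 0) := by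
  classical
  have hΞ0 : ∀ z, 0 ≤ Ξ z := fun z => (h01 z).1
  have hfin := aux_finsupp d Ξ hsupp
  have hsummable : ∀ w : Fin d → ℝ,
      Summable (fun k : Fin d → ℤ => Ξ (fun i => w i - (k i : ℝ))) := by
    intro w
    apply summable_of_ne_finset_zero (s := (hfin w).toFinset)
    intro b hb
    simpa using fun h => hb ((hfin w).mem_toFinset.2 h)
  have hsum_le : ∀ (w : Fin d → ℝ) (s : Finset (Fin d → ℤ)),
      ∑ p ∈ s, Ξ (fun i => w i - (p i : ℝ)) ≤ 1 := by
    intro w s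
    rw [← hpart w]
    exact Summable.sum_le_tsum s (fun b _ => hΞ0 _) (hsummable w)
  have hDNsub : ∀ N, DN N ⊆ closure D := by
    intro N
    obtain ⟨U, _, hUeq⟩ := hDNopen N
    rw [hUeq]; exact Set.inter_subset_right
  -- bound M for φ on closure D
  have hDc : IsCompact (closure D) := Metric.isCompact_of_isClosed_isBounded
    isClosed_closure hDbdd.closure
  obtain ⟨M₀, hM₀⟩ := hDc.exists_bound_of_continuousOn hφ
  set M : ℝ := max M₀ 0 with hMdef
  have hM : ∀ y ∈ closure D, |φ y| ≤ M := fun y hy => le_trans (hM₀ y hy) (le_max_left _ _)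
  have hM0 : 0 ≤ M := le_max_right _ _
  set S : ℕ → (Fin d → ℝ) → ℝ := fun N z => ∑ p ∈ G N, φ (fun i => (p i : ℝ) / (N : ℝ)) *
          Ξ (fun i => (N : ℝ) * z i - (p i : ℝ)) with hSdef
  have hGmem : ∀ N p, p ∈ G N → (fun i => (p i : ℝ) / (N : ℝ)) ∈ closure D :=
    fun N p hp => hDNsub N ((hG N p).1 hp)
  have hSbound : ∀ N z, |S N z| ≤ M := by
    intro N z
    apply le_trans (Finset.abs_sum_le_sum_abs _ _)
    calc ∑ p ∈ G N, |φ (fun i => (p i : ℝ) / (N : ℝ)) * Ξ (fun i => (N : ℝ) * z i - (p i : ℝ))|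
        ≤ ∑ p ∈ G N, M * Ξ (fun i => (N : ℝ) * z i - (p i : ℝ)) := by
          apply Finset.sum_le_sum
          intro p hp
          rw [abs_mul, abs_of_nonneg (hΞ0 _)]
          exact mul_le_mul_of_nonneg_right (hM _ (hGmem N p hp)) (hΞ0 _)
      _ = M * ∑ p ∈ G N, Ξ (fun i => ((N : ℝ) * z i) - (p i : ℝ)) := by rw [Finset.mul_sum]
      _ ≤ M * 1 := mul_le_mul_of_nonneg_left (hsum_le (fun i => (N : ℝ) * z i) _) hM0
      _ = M := mul_one M
  -- dominated convergence
  have hmeasS : ∀ N, Measurable (S N) := by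
    intro N
    apply Finset.measurable_sum
    intro p _
    apply Measurable.const_mul
    exact hmeas.comp (measurable_pi_lambda _ (fun i =>
      ((measurable_pi_apply i).const_mul _).sub measurable_const))
  have hφm : AEStronglyMeasurable φ (volume.restrict D) :=
    (hφ.mono subset_closure).aestronglyMeasurable hDopen.measurableSet
  have hFmeas : ∀ N, AEStronglyMeasurable (fun z => (S N z - φ z) ^ 2) (volume.restrict D) := by
    intro N
    exact ((hmeasS N).aestronglyMeasurable.sub hφm).pow 2
  have hbound : ∀ N, ∀ᵐ z ∂(volume.restrict D), ‖(S N z - φ z) ^ 2‖ ≤ (2 * M) ^ 2 := by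
    intro N
    filter_upwards [ae_restrict_mem hDopen.measurableSet] with z hz
    have h1 : |S N z - φ z| ≤ 2 * M := by
      have := hSbound N z
      have h2 := hM z (subset_closure hz)
      calc |S N z - φ z| ≤ |S N z| + |φ z| := abs_sub _ _
        _ ≤ M + M := add_le_add this h2
        _ = 2 * M := by ring
    rw [Real.norm_eq_abs, abs_pow]
    exact pow_le_pow_left₀ (abs_nonneg _) h1 2
  have hboundint : Integrable (fun _ : Fin d → ℝ => (2 * M) ^ 2) (volume.restrict D) := by
    exact integrableOn_const hDbdd.measure_lt_top.ne enorm_ne_top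
  -- a.e. pointwise convergence
  have hae : ∀ᵐ z ∂(volume.restrict D), Tendsto (fun N => (S N z - φ z) ^ 2) atTop (𝓝 0) := by
    have h2 : ∀ᵐ z ∂(volume.restrict D), z ∈ ⋃ N, DN N := by
      rw [ae_restrict_iff' hDopen.measurableSet, ae_iff]
      apply measure_mono_null _ hcover
      intro z hz
      simp only [Set.mem_setOf_eq, not_forall] at hz
      exact ⟨subset_closure hz.1, hz.2⟩
    filter_upwards [ae_restrict_mem hDopen.measurableSet, h2] with z hzD hzU
    obtain ⟨N₀, hN₀⟩ := Set.mem_iUnion.1 hzU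
    obtain ⟨U, hUopen, hUeq⟩ := hDNopen N₀
    have hzUU : z ∈ U := (hUeq ▸ hN₀).1
    obtain ⟨r, hr0, hrball⟩ := Metric.mem_nhds_iff.1
      ((hDopen.inter hUopen).mem_nhds ⟨hzD, hzUU⟩)
    have hkey : Tendsto (fun N => S N z - φ z) atTop (𝓝 0) := by
      rw [NormedAddCommGroup.tendsto_nhds_zero]
      intro ε hε
      obtain ⟨δ, hδ0, hδ⟩ := Metric.continuousWithinAt_iff.1 (hφ z (subset_closure hzD))
        (ε / 2) (half_pos hε)
      have hev1 : ∀ᶠ N : ℕ in atTop, 1 / (N : ℝ) < min δ r :=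
        tendsto_one_div_atTop_nhds_zero_nat.eventually (gt_mem_nhds (lt_min hδ0 hr0))
      filter_upwards [hev1, eventually_ge_atTop N₀, eventually_ge_atTop 1] with N hN1 hNN₀ hNpos
      have hNR : (0 : ℝ) < N := by exact_mod_cast hNpos
      -- every k in the support of Ξ(Nz - ·) is in G N and within 1/N of z
      have hkmem : ∀ k : Fin d → ℤ, Ξ (fun i => (N : ℝ) * z i - (k i : ℝ)) ≠ 0 →
          k ∈ G N ∧ dist (fun i => (k i : ℝ) / (N : ℝ)) z ≤ 1 / (N : ℝ) := by
        intro k hk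
        have h := hsupp hk
        rw [Set.mem_Icc] at h
        have h1 := h.1; have h2 := h.2
        rw [Pi.le_def] at h1 h2
        have hdist : dist (fun i => (k i : ℝ) / (N : ℝ)) z ≤ 1 / (N : ℝ) := by
          rw [dist_pi_le_iff (by positivity)]
          intro i
          rw [Real.dist_eq, abs_le]
          have h11 : (1 / (N : ℝ)) * N = 1 := one_div_mul_cancel (ne_of_gt hNR)
          constructor
          · have := h2 i
            rw [div_sub' (ne_of_gt hNR), le_div_iff₀ hNR]
            linarith
          · have := h1 i
            rw [div_sub' (ne_of_gt hNR), div_le_iff₀ hNR]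
            linarith
        refine ⟨?_, hdist⟩
        rw [hG]
        have hball : (fun i => (k i : ℝ) / (N : ℝ)) ∈ Metric.ball z r :=
          lt_of_le_of_lt hdist (lt_of_lt_of_le hN1 (min_le_right _ _))
        have hDU := hrball hball
        have : (fun i => (k i : ℝ) / (N : ℝ)) ∈ DN N₀ := by
          rw [hUeq]; exact ⟨hDU.2, subset_closure hDU.1⟩
        exact hmono hNN₀ this
      have hsum1 : ∑ p ∈ G N, Ξ (fun i => (N : ℝ) * z i - (p i : ℝ)) = 1 := by
        have := hpart (fun i => (N : ℝ) * z i)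
        rw [← this]
        exact (tsum_eq_sum (fun k hk => by
          by_contra hne
          exact hk (hkmem k hne).1)).symm
      have heq : S N z - φ z = ∑ p ∈ G N,
          (φ (fun i => (p i : ℝ) / (N : ℝ)) - φ z) * Ξ (fun i => (N : ℝ) * z i - (p i : ℝ)) := by
        simp only [sub_mul, Finset.sum_sub_distrib, ← Finset.mul_sum, hSdef, hsum1, mul_one]
      rw [Real.norm_eq_abs, heq]
      calc |∑ p ∈ G N, (φ (fun i => (p i : ℝ) / (N : ℝ)) - φ z) *
              Ξ (fun i => (N : ℝ) * z i - (p i : ℝ))|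
          ≤ ∑ p ∈ G N, |(φ (fun i => (p i : ℝ) / (N : ℝ)) - φ z) *
              Ξ (fun i => (N : ℝ) * z i - (p i : ℝ))| := Finset.abs_sum_le_sum_abs _ _
        _ ≤ ∑ p ∈ G N, (ε / 2) * Ξ (fun i => (N : ℝ) * z i - (p i : ℝ)) := by
            apply Finset.sum_le_sum
            intro p hp
            rw [abs_mul, abs_of_nonneg (hΞ0 _)]
            rcases eq_or_ne (Ξ (fun i => (N : ℝ) * z i - (p i : ℝ))) 0 with h0 | h0
            · rw [h0, mul_zero, mul_zero]
            · apply mul_le_mul_of_nonneg_right _ (hΞ0 _)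
              have hd := (hkmem p h0).2
              have hmemc : (fun i => (p i : ℝ) / (N : ℝ)) ∈ closure D := hGmem N p hp
              have := hδ hmemc (lt_of_le_of_lt hd (lt_of_lt_of_le hN1 (min_le_left _ _)))
              rw [Real.dist_eq] at this
              exact le_of_lt this
        _ = (ε / 2) * ∑ p ∈ G N, Ξ (fun i => (N : ℝ) * z i - (p i : ℝ)) := by
            rw [Finset.mul_sum]
        _ = ε / 2 := by rw [hsum1, mul_one]
        _ < ε := half_lt_self hε
    have := hkey.pow 2
    simpa using this
  have := tendsto_integral_of_dominated_convergence (fun _ => (2 * M) ^ 2)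
    hFmeas hboundint hbound hae
  simpa using this
end

section
/- Let H be a separable Hilbert space, (Λ_N), (Λ̃_N) injective linear maps ℝ^{k_N} → H such that the operators Λ̃_N ∘ Λ_N^{−1} are uniformly bounded in operator norm, and suppose for every φ in a dense subset S ⊆ H and every ε > 0 there exist, for all large N, points x ∈ ℝ^{k_N} with ‖Λ_N x − φ‖ < ε and ‖Λ̃_N x − φ‖ < ε. Then for every compact K₁ ⊂ H there is a compact K₂ ⊂ H with ⋃_{N} Λ̃_N(Λ_N^{−1}(K₁)) ⊆ K₂. -/
open MeasureTheory

/-- Uniform compact containment: if the composites `Λ̃_N ∘ Λ_N⁻¹` are uniformly bounded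
and both height maps approximate a dense set of points of `H`, then for every compact
`K₁ ⊆ H` there is a compact `K₂ ⊆ H` with `⋃_N Λ̃_N(Λ_N⁻¹(K₁)) ⊆ K₂`. -/
theorem compact_containment_of_height_maps
    {H : Type*} [NormedAddCommGroup H] [InnerProductSpace ℝ H] [CompleteSpace H]
    [SecondCountableTopology H]
    (k : ℕ → ℕ)
    (Λ Λt : ∀ N : ℕ, EuclideanSpace ℝ (Fin (k N)) →ₗ[ℝ] H)
    (hinj : ∀ N, Function.Injective (Λ N)) (hinjt : ∀ N, Function.Injective (Λt N))
    (M : ℝ) (hM : ∀ (N : ℕ) x, ‖Λt N x‖ ≤ M * ‖Λ N x‖)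
    (S : Set H) (hS : Dense S)
    (happrox : ∀ φ ∈ S, ∀ ε > (0 : ℝ), ∃ N₀ : ℕ, ∀ N ≥ N₀,
      ∃ x : EuclideanSpace ℝ (Fin (k N)), ‖Λ N x - φ‖ < ε ∧ ‖Λt N x - φ‖ < ε)
    (K₁ : Set H) (hK₁ : IsCompact K₁) :
    ∃ K₂ : Set H, IsCompact K₂ ∧
      ∀ (N : ℕ) (x : EuclideanSpace ℝ (Fin (k N))), Λ N x ∈ K₁ → Λt N x ∈ K₂ := by
  classical
  set M' : ℝ := |M| + 1 with hM'def
  have hM'pos : (0 : ℝ) < M' := by positivity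
  have hM' : ∀ (N : ℕ) x, ‖Λt N x‖ ≤ M' * ‖Λ N x‖ := by
    intro N x
    refine (hM N x).trans (mul_le_mul_of_nonneg_right ?_ (norm_nonneg _))
    have := le_abs_self M
    simp only [hM'def]; linarith
  set T : Set H := ⋃ N, Λt N '' ((Λ N) ⁻¹' K₁) with hT
  refine ⟨closure T, ?_, ?_⟩
  · refine TotallyBounded.isCompact_of_isClosed ?_ isClosed_closure
    refine TotallyBounded.closure ?_
    rw [Metric.totallyBounded_iff]
    intro ε hε
    set δ : ℝ := ε / (3 * M' + 2) with hδdef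
    have hδ : 0 < δ := by positivity
    have hεδ : (3 * M' + 2) * δ = ε := by
      rw [hδdef]; field_simp
    -- cover K₁ by δ-balls
    obtain ⟨F, hFfin, hFcov⟩ := Metric.totallyBounded_iff.mp hK₁.totallyBounded δ hδ
    -- for each center choose an approximating point of S and a threshold
    have hchoice : ∀ y : H, ∃ φN : H × ℕ, φN.1 ∈ S ∧ dist y φN.1 < δ ∧
        ∀ N ≥ φN.2, ∃ x : EuclideanSpace ℝ (Fin (k N)),
          ‖Λ N x - φN.1‖ < δ ∧ ‖Λt N x - φN.1‖ < δ := by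
      intro y
      obtain ⟨φ, hφS, hφd⟩ := hS.exists_dist_lt y hδ
      obtain ⟨N₀, hN₀⟩ := happrox φ hφS δ hδ
      exact ⟨(φ, N₀), hφS, hφd, hN₀⟩
    choose φN hφS hφd hφap using hchoice
    obtain ⟨N₀, hN₀⟩ : ∃ N₀ : ℕ, ∀ y ∈ F, (φN y).2 ≤ N₀ := by
      obtain ⟨N₀, hN₀⟩ := (hFfin.image fun y => (φN y).2).bddAbove
      exact ⟨N₀, fun y hy => hN₀ (Set.mem_image_of_mem _ hy)⟩
    -- the finitely many small-`N` pieces form a compact set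
    have hC : IsCompact (⋃ N ∈ Finset.range N₀, Λt N '' ((Λ N) ⁻¹' K₁)) := by
      refine (Finset.range N₀).isCompact_biUnion ?_
      intro N _
      have hemb := LinearMap.isClosedEmbedding_of_injective
        (f := Λ N) (LinearMap.ker_eq_bot.mpr (hinj N))
      exact (hemb.isCompact_preimage hK₁).image (LinearMap.continuous_of_finiteDimensional _)
    obtain ⟨t₁, ht₁fin, ht₁cov⟩ := Metric.totallyBounded_iff.mp hC.totallyBounded ε hε
    refine ⟨t₁ ∪ (fun y => (φN y).1) '' F, ht₁fin.union (hFfin.image _), ?_⟩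
    rintro z hz
    rw [hT, Set.mem_iUnion] at hz
    obtain ⟨N, x, hxK, rfl⟩ := hz
    by_cases hN : N < N₀
    · have hzC : Λt N x ∈ ⋃ N ∈ Finset.range N₀, Λt N '' ((Λ N) ⁻¹' K₁) := by
        refine Set.mem_biUnion (Finset.mem_range.mpr hN) ?_
        exact Set.mem_image_of_mem _ hxK
      obtain ⟨y, hy, hball⟩ := Set.mem_iUnion₂.mp (ht₁cov hzC)
      exact Set.mem_iUnion₂.mpr ⟨y, Or.inl hy, hball⟩
    · push_neg at hN
      obtain ⟨y, hyF, hyb⟩ := Set.mem_iUnion₂.mp (hFcov hxK)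
      obtain ⟨x₀, hx₀, hxt₀⟩ := hφap y N (le_trans (hN₀ y hyF) hN)
      set φ := (φN y).1 with hφdef
      have hx1 : ‖Λ N x - φ‖ < 2 * δ := by
        have h1 : dist (Λ N x) y < δ := Metric.mem_ball.mp hyb
        have h2 : dist y φ < δ := hφd y
        have := dist_triangle (Λ N x) y φ
        rw [dist_eq_norm] at this
        linarith
      have hsub : ‖Λ N x - Λ N x₀‖ ≤ ‖Λ N x - φ‖ + ‖Λ N x₀ - φ‖ := by
        have : Λ N x - Λ N x₀ = (Λ N x - φ) - (Λ N x₀ - φ) := by abel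
        rw [this]; exact norm_sub_le _ _
      have hkey : ‖Λt N x - φ‖ ≤ ‖Λt N (x - x₀)‖ + ‖Λt N x₀ - φ‖ := by
        have : Λt N x - φ = Λt N (x - x₀) + (Λt N x₀ - φ) := by
          rw [map_sub]; abel
        rw [this]; exact norm_add_le _ _
      have hop : ‖Λt N (x - x₀)‖ ≤ M' * ‖Λ N x - Λ N x₀‖ := by
        have := hM' N (x - x₀)
        rwa [map_sub (Λ N)] at this
      have hmul : M' * ‖Λ N x - Λ N x₀‖ ≤ M' * (3 * δ) := by
        refine mul_le_mul_of_nonneg_left ?_ hM'pos.le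
        linarith
      have hfinal : ‖Λt N x - φ‖ < ε := by
        rw [← hεδ]
        nlinarith [hxt₀]
      refine Set.mem_iUnion₂.mpr ⟨φ, Or.inr ⟨y, hyF, rfl⟩, ?_⟩
      rw [Metric.mem_ball, dist_eq_norm]
      exact hfinal
  · intro N x hx
    exact subset_closure (Set.mem_iUnion.mpr ⟨N, Set.mem_image_of_mem _ hx⟩)
end

section
/- Let (g_N) be a sequence of bounded monotone increasing functions on ℝ and g : ℝ → ℝ bounded, such that for every δ > 0, sup_{x∈ℝ} inf_{|r|≤δ} |g(x) − g_N(x+r)| → 0 as N → ∞. Then for each m ∈ ℕ there exist continuous bounded functions g_{N,m}^min, g_{N,m}^maj with −‖g_N‖_∞ ≤ g_{N,m}^min ≤ g_N ≤ g_{N,m}^maj ≤ ‖g_N‖_∞, continuous limits g_m^min, g_m^maj with ‖g_{N,m}^min − g_m^min‖_∞ → 0 and ‖g_{N,m}^maj − g_m^maj‖_∞ → 0 as N → ∞, and such that g_m^min(x) → g(x) and g_m^maj(x) → g(x) as m → ∞ at every continuity point x of g. -/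
open MeasureTheory Filter Topology intervalIntegral Set

/-- The supremum norm `‖f‖_∞ = ⨆ x, |f x|` of a function `f : ℝ → ℝ`. -/
noncomputable def supNorm (f : ℝ → ℝ) : ℝ := ⨆ x : ℝ, |f x|

noncomputable def slideAvg (f : ℝ → ℝ) (h a x : ℝ) : ℝ := (∫ t in (x + a)..(x + a + h), f t) / h

lemma slideAvg_continuous {f : ℝ → ℝ} (hf : Monotone f) (h a : ℝ) :
    Continuous fun x => slideAvg f h a x := by
  have hint : ∀ c d : ℝ, IntervalIntegrable f volume c d := fun c d => hf.intervalIntegrable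
  have hF : Continuous fun y : ℝ => ∫ t in (0:ℝ)..y, f t :=
    intervalIntegral.continuous_primitive hint 0
  have heq : ∀ x : ℝ, slideAvg f h a x
      = ((∫ t in (0:ℝ)..(x + a + h), f t) - ∫ t in (0:ℝ)..(x + a), f t) / h := by
    intro x
    rw [slideAvg, intervalIntegral.integral_interval_sub_left (hint _ _) (hint _ _)]
  simp only [heq]
  exact ((hF.comp (by continuity)).sub (hF.comp (by continuity))).div_const h

lemma slideAvg_le {f : ℝ → ℝ} (hf : Monotone f) {h : ℝ} (hh : 0 < h) {a x c : ℝ}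
    (hc : ∀ t ∈ Icc (x + a) (x + a + h), f t ≤ c) : slideAvg f h a x ≤ c := by
  have h1 : (∫ t in (x + a)..(x + a + h), f t) ≤ ∫ _t in (x + a)..(x + a + h), c :=
    intervalIntegral.integral_mono_on (by linarith) hf.intervalIntegrable
      intervalIntegrable_const hc
  rw [intervalIntegral.integral_const, smul_eq_mul] at h1
  rw [slideAvg, div_le_iff₀ hh]
  calc (∫ t in (x + a)..(x + a + h), f t) ≤ (x + a + h - (x + a)) * c := h1
    _ = c * h := by ring

lemma le_slideAvg {f : ℝ → ℝ} (hf : Monotone f) {h : ℝ} (hh : 0 < h) {a x c : ℝ}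
    (hc : ∀ t ∈ Icc (x + a) (x + a + h), c ≤ f t) : c ≤ slideAvg f h a x := by
  have h1 : (∫ _t in (x + a)..(x + a + h), c) ≤ ∫ t in (x + a)..(x + a + h), f t :=
    intervalIntegral.integral_mono_on (by linarith) intervalIntegrable_const
      hf.intervalIntegrable hc
  rw [intervalIntegral.integral_const, smul_eq_mul] at h1
  rw [slideAvg, le_div_iff₀ hh]
  calc c * h = (x + a + h - (x + a)) * c := by ring
    _ ≤ _ := h1

lemma slideAvg_le_self {f : ℝ → ℝ} (hf : Monotone f) {h : ℝ} (hh : 0 < h) (x : ℝ) :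
    slideAvg f h (-h) x ≤ f x := by
  apply slideAvg_le hf hh
  intro t ht
  exact hf (by rcases ht with ⟨h1, h2⟩; linarith)

lemma self_le_slideAvg {f : ℝ → ℝ} (hf : Monotone f) {h : ℝ} (hh : 0 < h) (x : ℝ) :
    f x ≤ slideAvg f h 0 x := by
  apply le_slideAvg hf hh
  intro t ht
  exact hf (by rcases ht with ⟨h1, h2⟩; linarith)

lemma slideAvg_comp {f1 f2 : ℝ → ℝ} (hf1 : Monotone f1) (hf2 : Monotone f2)
    {h : ℝ} (hh : 0 < h) {C ε s : ℝ} (hs : 0 ≤ s) (hC : ∀ t, |f2 t| ≤ C)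
    (hle : ∀ t, f1 t ≤ f2 (t + s) + ε) (a x : ℝ) :
    slideAvg f1 h a x ≤ slideAvg f2 h a x + ε + 2 * s * C / h := by
  set u := x + a with hu
  have hint2 : ∀ c d : ℝ, IntervalIntegrable f2 volume c d := fun c d => hf2.intervalIntegrable
  have hints : IntervalIntegrable (fun t => f2 (t + s) + ε) volume u (u + h) := by
    have : Monotone fun t => f2 (t + s) + ε := by
      intro p q hpq; exact add_le_add_left (hf2 (by linarith)) ε
    exact this.intervalIntegrable
  have h1 : (∫ t in u..(u + h), f1 t) ≤ ∫ t in u..(u + h), (f2 (t + s) + ε) :=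
    intervalIntegral.integral_mono_on (by linarith) hf1.intervalIntegrable hints
      (fun t _ => hle t)
  have h2 : (∫ t in u..(u + h), (f2 (t + s) + ε)) =
      (∫ t in (u + s)..(u + h + s), f2 t) + ε * h := by
    have hmonos : Monotone (fun t : ℝ => f2 (t + s)) := fun p q hpq => hf2 (by linarith)
    rw [intervalIntegral.integral_add hmonos.intervalIntegrable intervalIntegrable_const]
    rw [intervalIntegral.integral_comp_add_right, intervalIntegral.integral_const, smul_eq_mul]
    ring_nf
  have h3 : (∫ t in (u + s)..(u + h + s), f2 t) =
      (∫ t in u..(u + h), f2 t) + ((∫ t in (u + h)..(u + h + s), f2 t)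
        - ∫ t in u..(u + s), f2 t) := by
    have e1 : (∫ t in (u+s)..(u+h+s), f2 t) = (∫ t in (u+s)..(u+h), f2 t)
        + (∫ t in (u+h)..(u+h+s), f2 t) :=
      (intervalIntegral.integral_add_adjacent_intervals (hint2 _ _) (hint2 _ _)).symm
    have e2 : (∫ t in u..(u+h), f2 t) = (∫ t in u..(u+s), f2 t)
        + (∫ t in (u+s)..(u+h), f2 t) :=
      (intervalIntegral.integral_add_adjacent_intervals (hint2 _ _) (hint2 _ _)).symm
    rw [e1, e2]; ring
  have hb1 : |∫ t in (u + h)..(u + h + s), f2 t| ≤ s * C := by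
    have := intervalIntegral.norm_integral_le_of_norm_le_const
      (C := C) (a := u + h) (b := u + h + s) (f := f2) (fun t _ => by
        simpa [Real.norm_eq_abs] using hC t)
    simpa [Real.norm_eq_abs, abs_of_nonneg hs, mul_comm, show u + h + s - (u + h) = s by ring]
      using this
  have hb2 : |∫ t in u..(u + s), f2 t| ≤ s * C := by
    have := intervalIntegral.norm_integral_le_of_norm_le_const
      (C := C) (a := u) (b := u + s) (f := f2) (fun t _ => by
        simpa [Real.norm_eq_abs] using hC t)
    simpa [Real.norm_eq_abs, abs_of_nonneg hs, mul_comm, show u + s - u = s by ring] using this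
  have key : (∫ t in u..(u + h), f1 t) ≤ (∫ t in u..(u + h), f2 t) + ε * h + 2 * s * C := by
    have := abs_le.1 hb1
    have := abs_le.1 hb2
    calc (∫ t in u..(u + h), f1 t) ≤ _ := h1
      _ = (∫ t in (u + s)..(u + h + s), f2 t) + ε * h := h2
      _ = (∫ t in u..(u + h), f2 t) + ((∫ t in (u + h)..(u + h + s), f2 t)
            - ∫ t in u..(u + s), f2 t) + ε * h := by rw [h3]
      _ ≤ (∫ t in u..(u + h), f2 t) + ε * h + 2 * s * C := by linarith
  have h5 : ((∫ t in u..(u + h), f2 t) + ε * h + 2 * s * C) / h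
      = (∫ t in u..(u + h), f2 t) / h + ε + 2 * s * C / h := by field_simp
  rw [slideAvg, slideAvg, ← hu, ← h5]
  exact (div_le_div_iff_of_pos_right hh).2 key

lemma sup_abs_tendsto_zero {F : ℕ → ℝ → ℝ} {f : ℝ → ℝ}
    (h : TendstoUniformlyOn F f atTop Set.univ) :
    Tendsto (fun N => ⨆ x : ℝ, |F N x - f x|) atTop (𝓝 0) := by
  rw [Metric.tendsto_atTop]
  intro ε hε
  have h2 := (Metric.tendstoUniformlyOn_iff.1 h) (ε/2) (by positivity)
  obtain ⟨N₀, hN₀⟩ := eventually_atTop.1 h2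
  refine ⟨N₀, fun N hN => ?_⟩
  have hb : ∀ x : ℝ, |F N x - f x| ≤ ε/2 := by
    intro x
    have := hN₀ N hN x (Set.mem_univ x)
    rw [Real.dist_eq, abs_sub_comm] at this
    linarith
  have hbdd : BddAbove (Set.range fun x : ℝ => |F N x - f x|) :=
    ⟨ε/2, by rintro _ ⟨x, rfl⟩; exact hb x⟩
  have hsup_le : (⨆ x : ℝ, |F N x - f x|) ≤ ε/2 := ciSup_le hb
  have hsup_ge : (0:ℝ) ≤ ⨆ x : ℝ, |F N x - f x| :=
    le_trans (abs_nonneg _) (le_ciSup hbdd 0)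
  rw [Real.dist_eq, sub_zero, abs_of_nonneg hsup_ge]
  linarith

/-- Lemma A.2: continuous monotone approximation. If `(g_N)` are bounded monotone
increasing functions and `g` is bounded with
`sup_x inf_{|r|≤δ} |g(x) − g_N(x+r)| → 0` for each `δ > 0`, then for each `m` there are
continuous minorants `g_{N,m}^min ≤ g_N` and majorants `g_{N,m}^maj ≥ g_N`, bounded by
`±‖g_N‖_∞`, converging uniformly in `N` to continuous limits `g_m^min, g_m^maj`, which in
turn converge to `g` at every continuity point as `m → ∞`. -/
theorem monotone_approximation_minorant_majorant
    (gN : ℕ → ℝ → ℝ) (g : ℝ → ℝ)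
    (hmono : ∀ N, Monotone (gN N))
    (hbN : ∀ N, BddAbove (Set.range fun x => |gN N x|))
    (hbg : BddAbove (Set.range fun x => |g x|))
    (happrox : ∀ δ > (0 : ℝ),
      Tendsto (fun N => ⨆ x : ℝ, ⨅ r : Set.Icc (-δ) δ, |g x - gN N (x + (r : ℝ))|)
        atTop (𝓝 0)) :
    ∃ (gmin gmaj : ℕ → ℕ → ℝ → ℝ) (glmin glmaj : ℕ → ℝ → ℝ),
      (∀ N m, Continuous (gmin N m) ∧ Continuous (gmaj N m)) ∧
      (∀ N m x, -supNorm (gN N) ≤ gmin N m x ∧ gmin N m x ≤ gN N x ∧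
        gN N x ≤ gmaj N m x ∧ gmaj N m x ≤ supNorm (gN N)) ∧
      (∀ m, Continuous (glmin m) ∧ Continuous (glmaj m)) ∧
      (∀ m, Tendsto (fun N => ⨆ x : ℝ, |gmin N m x - glmin m x|) atTop (𝓝 0) ∧
        Tendsto (fun N => ⨆ x : ℝ, |gmaj N m x - glmaj m x|) atTop (𝓝 0)) ∧
      (∀ x : ℝ, ContinuousAt g x →
        Tendsto (fun m => glmin m x) atTop (𝓝 (g x)) ∧
        Tendsto (fun m => glmaj m x) atTop (𝓝 (g x))) := by
  classical
  obtain ⟨Mg0, hMg0⟩ := hbg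
  have hMg : ∀ x, |g x| ≤ Mg0 := fun x => hMg0 ⟨x, rfl⟩
  set C : ℝ := Mg0 + 1 with hCdef
  have hC0 : 0 < C := by
    have := hMg 0
    have := abs_nonneg (g 0)
    simp only [hCdef]; linarith
  set S : ℕ → ℝ → ℝ :=
    fun N δ => ⨆ x : ℝ, ⨅ r : Set.Icc (-δ) δ, |g x - gN N (x + (r : ℝ))| with hSdef
  -- key shift estimates
  have key : ∀ δ : ℝ, 0 < δ → ∀ N x,
      gN N x ≤ g (x + δ) + S N δ ∧ g x ≤ gN N (x + δ) + S N δ := by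
    intro δ hδ N x
    haveI hne : Nonempty (Set.Icc (-δ) δ) := ⟨⟨0, by constructor <;> linarith⟩⟩
    obtain ⟨BN, hBN⟩ := hbN N
    have hBN' : ∀ y, |gN N y| ≤ BN := fun y => hBN ⟨y, rfl⟩
    set T : ℝ → ℝ := fun y => ⨅ r : Set.Icc (-δ) δ, |g y - gN N (y + (r : ℝ))| with hTdef
    have hTbdd : ∀ y, BddBelow (Set.range fun r : Set.Icc (-δ) δ => |g y - gN N (y + (r:ℝ))|) :=
      fun y => ⟨0, by rintro _ ⟨r, rfl⟩; positivity⟩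
    have hTle : ∀ y, T y ≤ Mg0 + BN := by
      intro y
      have h0 : T y ≤ |g y - gN N (y + ((⟨0, by constructor <;> linarith⟩ :
          Set.Icc (-δ) δ) : ℝ))| := ciInf_le (hTbdd y) _
      calc T y ≤ |g y - gN N (y + 0)| := h0
        _ ≤ |g y| + |gN N (y + 0)| := abs_sub _ _
        _ ≤ Mg0 + BN := add_le_add (hMg y) (hBN' _)
    have hTS : ∀ y, T y ≤ S N δ :=
      fun y => le_ciSup (⟨Mg0 + BN, by rintro _ ⟨y, rfl⟩; exact hTle y⟩ :
        BddAbove (Set.range T)) y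
    constructor
    · refine le_of_forall_pos_le_add ?_
      intro ε hε
      have hlt : T (x + δ) < S N δ + ε := lt_of_le_of_lt (hTS _) (by linarith)
      obtain ⟨r, hr⟩ := exists_lt_of_ciInf_lt hlt
      obtain ⟨hr1, hr2⟩ := r.2
      have hmle : gN N x ≤ gN N (x + δ + (r : ℝ)) := hmono N (by linarith)
      have habs := abs_lt.1 hr
      have : gN N (x + δ + (r : ℝ)) < g (x + δ) + (S N δ + ε) := by linarith [habs.1]
      linarith
    · refine le_of_forall_pos_le_add ?_
      intro ε hε
      have hlt : T x < S N δ + ε := lt_of_le_of_lt (hTS _) (by linarith)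
      obtain ⟨r, hr⟩ := exists_lt_of_ciInf_lt hlt
      obtain ⟨hr1, hr2⟩ := r.2
      have hmle : gN N (x + (r : ℝ)) ≤ gN N (x + δ) := hmono N (by linarith)
      have habs := abs_lt.1 hr
      have : g x < gN N (x + (r : ℝ)) + (S N δ + ε) := by linarith [habs.2]
      linarith
  have hSnonneg : ∀ N δ, 0 ≤ S N δ := by
    intro N δ
    apply Real.iSup_nonneg
    intro x
    exact Real.iInf_nonneg fun r => abs_nonneg _
  have hStend : ∀ δ : ℝ, 0 < δ → Tendsto (fun N => S N δ) atTop (𝓝 0) :=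
    fun δ hδ => happrox δ hδ
  -- eventual uniform bound
  have hEvBd : ∀ᶠ N in atTop, ∀ x, |gN N x| ≤ C := by
    have h1 : ∀ᶠ N in atTop, S N 1 < 1 :=
      (hStend 1 one_pos).eventually (eventually_lt_nhds one_pos)
    filter_upwards [h1] with N hN x
    have hup := (key 1 one_pos N x).1
    have hdn := (key 1 one_pos N (x - 1)).2
    rw [sub_add_cancel] at hdn
    have hg1 := abs_le.1 (hMg (x + 1))
    have hg2 := abs_le.1 (hMg (x - 1))
    rw [abs_le]
    constructor
    · simp only [hCdef]; linarith
    · simp only [hCdef]; linarith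
  -- the step sizes
  set hstep : ℕ → ℝ := fun m => 1 / ((m : ℝ) + 1) with hstepdef
  have hstep_pos : ∀ m, 0 < hstep m := by intro m; positivity
  -- main construction for a generic shift
  have main : ∀ a : ℕ → ℝ, (∀ m, -(hstep m) ≤ a m ∧ a m ≤ 0) →
      ∃ gl : ℕ → ℝ → ℝ, (∀ m, Continuous (gl m)) ∧
        (∀ m, Tendsto (fun N => ⨆ x : ℝ, |slideAvg (gN N) (hstep m) (a m) x - gl m x|)
          atTop (𝓝 0)) ∧
        (∀ x : ℝ, ContinuousAt g x → Tendsto (fun m => gl m x) atTop (𝓝 (g x))) := by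
    intro a ha
    -- uniform Cauchy
    have hUC : ∀ m, UniformCauchySeqOn
        (fun N x => slideAvg (gN N) (hstep m) (a m) x) atTop Set.univ := by
      intro m
      rw [Metric.uniformCauchySeqOn_iff]
      intro ε hε
      set δ : ℝ := min 1 (ε * hstep m / (32 * C)) with hδdef
      have hδ0 : 0 < δ := lt_min one_pos (by positivity)
      have hδ2 : δ ≤ ε * hstep m / (32 * C) := min_le_right _ _
      have hEv : ∀ᶠ N in atTop, (S N δ ≤ ε/16 ∧ ∀ x, |gN N x| ≤ C) := by
        have h1 : ∀ᶠ N in atTop, S N δ < ε/16 :=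
          (hStend δ hδ0).eventually (eventually_lt_nhds (by positivity))
        filter_upwards [h1, hEvBd] with N h1 h2
        exact ⟨h1.le, h2⟩
      obtain ⟨N₀, hN₀⟩ := eventually_atTop.1 hEv
      refine ⟨N₀, fun N hN M hM x _ => ?_⟩
      obtain ⟨hSN, hBdN⟩ := hN₀ N hN
      obtain ⟨hSM, hBdM⟩ := hN₀ M hM
      have htail : 2 * (2 * δ) * C / hstep m ≤ ε / 8 := by
        rw [div_le_iff₀ (hstep_pos m)]
        have h32 : (0:ℝ) < 32 * C := by positivity
        have h1 : δ * (32 * C) ≤ ε * hstep m := (le_div_iff₀ h32).1 hδ2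
        have h2 : 2 * (2 * δ) * C = δ * (32 * C) / 8 := by ring
        have h3 : ε / 8 * hstep m = ε * hstep m / 8 := by ring
        rw [h2, h3]
        gcongr
      have hone : ∀ t, gN N t ≤ gN M (t + 2 * δ) + (ε/8) := by
        intro t
        have h1 := (key δ hδ0 N t).1
        have h2 := (key δ hδ0 M (t + δ)).2
        have he : t + δ + δ = t + 2 * δ := by ring
        rw [he] at h2
        linarith
      have htwo : ∀ t, gN M t ≤ gN N (t + 2 * δ) + (ε/8) := by
        intro t
        have h1 := (key δ hδ0 M t).1
        have h2 := (key δ hδ0 N (t + δ)).2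
        have he : t + δ + δ = t + 2 * δ := by ring
        rw [he] at h2
        linarith
      have hle1 : slideAvg (gN N) (hstep m) (a m) x ≤
          slideAvg (gN M) (hstep m) (a m) x + ε/8 + 2 * (2*δ) * C / hstep m :=
        slideAvg_comp (hmono N) (hmono M) (hstep_pos m) (by linarith) hBdM hone (a m) x
      have hle2 : slideAvg (gN M) (hstep m) (a m) x ≤
          slideAvg (gN N) (hstep m) (a m) x + ε/8 + 2 * (2*δ) * C / hstep m :=
        slideAvg_comp (hmono M) (hmono N) (hstep_pos m) (by linarith) hBdN htwo (a m) x
      rw [Real.dist_eq, abs_sub_lt_iff]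
      constructor <;> linarith
    -- pointwise limits
    have hcs : ∀ m x, CauchySeq (fun N => slideAvg (gN N) (hstep m) (a m) x) := by
      intro m x
      rw [Metric.cauchySeq_iff]
      intro ε hε
      obtain ⟨N₀, hN₀⟩ := Metric.uniformCauchySeqOn_iff.1 (hUC m) ε hε
      exact ⟨N₀, fun p hp q hq => hN₀ p hp q hq x (Set.mem_univ x)⟩
    set gl : ℕ → ℝ → ℝ :=
      fun m x => limUnder atTop (fun N => slideAvg (gN N) (hstep m) (a m) x) with hgldef
    have hptw : ∀ m x, Tendsto (fun N => slideAvg (gN N) (hstep m) (a m) x)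
        atTop (𝓝 (gl m x)) := fun m x => (hcs m x).tendsto_limUnder
    have hTU : ∀ m, TendstoUniformlyOn (fun N x => slideAvg (gN N) (hstep m) (a m) x)
        (gl m) atTop Set.univ :=
      fun m => (hUC m).tendstoUniformlyOn_of_tendsto (fun x _ => hptw m x)
    refine ⟨gl, ?_, ?_, ?_⟩
    · intro m
      have := (hTU m).continuousOn
        (Frequently.of_forall fun N => (slideAvg_continuous (hmono N) _ _).continuousOn)
      rw [← continuousOn_univ]
      exact this
    · intro m
      exact sup_abs_tendsto_zero (hTU m)
    · intro x hcont
      rw [Metric.tendsto_atTop]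
      intro ε hε
      obtain ⟨δ₁, hδ₁0, hδ₁⟩ := Metric.continuousAt_iff.1 hcont (ε/4) (by positivity)
      set M₀ : ℕ := ⌈4 / δ₁⌉₊ with hM₀
      refine ⟨M₀, fun m hm => ?_⟩
      have hmcast : (M₀ : ℝ) ≤ m := Nat.cast_le.2 hm
      have hceil : (4 / δ₁ : ℝ) ≤ M₀ := Nat.le_ceil _
      have hm1 : (4 / δ₁ : ℝ) ≤ (m : ℝ) + 1 := by linarith
      have hsmall : hstep m ≤ δ₁ / 4 := by
        rw [hstepdef]
        rw [div_le_div_iff₀ (by positivity) (by norm_num)]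
        have := (div_le_iff₀ hδ₁0).1 hm1
        nlinarith
      set δ₂ : ℝ := δ₁ / 4 with hδ₂
      have hδ₂0 : 0 < δ₂ := by positivity
      -- bounds on window
      have hup : ∀ N, slideAvg (gN N) (hstep m) (a m) x ≤ g x + ε/4 + S N δ₂ := by
        intro N
        apply slideAvg_le (hmono N) (hstep_pos m)
        intro t ht
        obtain ⟨ht1, ht2⟩ := ht
        obtain ⟨ha1, ha2⟩ := ha m
        have htx : |t - x| ≤ hstep m := by
          rw [abs_le]; constructor <;> linarith
        have h1 := (key δ₂ hδ₂0 N t).1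
        have h2 : dist (t + δ₂) x < δ₁ := by
          rw [Real.dist_eq, abs_lt]
          have := abs_le.1 htx
          constructor <;> [linarith; linarith [hstep_pos m]]
        have h3 := hδ₁ h2
        rw [Real.dist_eq, abs_lt] at h3
        linarith [h3.1, h3.2]
      have hdn : ∀ N, g x - ε/4 - S N δ₂ ≤ slideAvg (gN N) (hstep m) (a m) x := by
        intro N
        apply le_slideAvg (hmono N) (hstep_pos m)
        intro t ht
        obtain ⟨ht1, ht2⟩ := ht
        obtain ⟨ha1, ha2⟩ := ha m
        have htx : |t - x| ≤ hstep m := by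
          rw [abs_le]; constructor <;> linarith
        have h1 := (key δ₂ hδ₂0 N (t - δ₂)).2
        rw [sub_add_cancel] at h1
        have h2 : dist (t - δ₂) x < δ₁ := by
          rw [Real.dist_eq, abs_lt]
          have := abs_le.1 htx
          constructor <;> [linarith; linarith [hstep_pos m]]
        have h3 := hδ₁ h2
        rw [Real.dist_eq, abs_lt] at h3
        linarith [h3.1, h3.2]
      -- pass to the limit in N
      have hlim1 : gl m x ≤ g x + ε/4 := by
        have htendR : Tendsto (fun N => g x + ε/4 + S N δ₂) atTop (𝓝 (g x + ε/4)) := by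
          have := (tendsto_const_nhds (x := g x + ε/4) (f := atTop (α := ℕ))).add
            (hStend δ₂ hδ₂0)
          simpa using this
        exact le_of_tendsto_of_tendsto' (hptw m x) htendR hup
      have hlim2 : g x - ε/4 ≤ gl m x := by
        have htendL : Tendsto (fun N => g x - ε/4 - S N δ₂) atTop (𝓝 (g x - ε/4)) := by
          have := (tendsto_const_nhds (x := g x - ε/4) (f := atTop (α := ℕ))).sub
            (hStend δ₂ hδ₂0)
          simpa using this
        exact le_of_tendsto_of_tendsto' htendL (hptw m x) hdn
      rw [Real.dist_eq, abs_lt]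
      constructor <;> linarith
  -- instantiate
  obtain ⟨glmin, hglmin_cont, hglmin_unif, hglmin_pt⟩ :=
    main (fun m => -(hstep m)) (fun m => ⟨le_refl _,
      show -(hstep m) ≤ 0 by linarith [hstep_pos m]⟩)
  obtain ⟨glmaj, hglmaj_cont, hglmaj_unif, hglmaj_pt⟩ :=
    main (fun m => 0) (fun m => ⟨show -(hstep m) ≤ 0 by linarith [hstep_pos m], le_refl _⟩)
  refine ⟨fun N m => slideAvg (gN N) (hstep m) (-(hstep m)),
    fun N m => slideAvg (gN N) (hstep m) 0, glmin, glmaj, ?_, ?_, ?_, ?_, ?_⟩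
  · intro N m
    exact ⟨slideAvg_continuous (hmono N) _ _, slideAvg_continuous (hmono N) _ _⟩
  · intro N m x
    have hsupN : ∀ y, |gN N y| ≤ supNorm (gN N) := by
      intro y
      rw [supNorm]
      exact le_ciSup (hbN N) y
    refine ⟨?_, slideAvg_le_self (hmono N) (hstep_pos m) x,
      self_le_slideAvg (hmono N) (hstep_pos m) x, ?_⟩
    · exact le_slideAvg (hmono N) (hstep_pos m) fun t _ => (abs_le.1 (hsupN t)).1
    · exact slideAvg_le (hmono N) (hstep_pos m) fun t _ => (abs_le.1 (hsupN t)).2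
  · intro m
    exact ⟨hglmin_cont m, hglmaj_cont m⟩
  · intro m
    exact ⟨hglmin_unif m, hglmaj_unif m⟩
  · intro x hx
    exact ⟨hglmin_pt x hx, hglmaj_pt x hx⟩
end

section
/- Let D ⊆ ℝ^d be a domain and μ a non-degenerate centred Gaussian measure on H = L²(D). Then for every a ∈ ℝ, the level set {z ∈ D : h(z) = a} has Lebesgue measure zero for μ-almost every h ∈ H. -/
open MeasureTheory

/-- A Borel probability measure `μ` on a real inner product space is a centred Gaussian
measure if every continuous linear functional pushes it forward to a centred Gaussian
measure on `ℝ`. -/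
def IsCenteredGaussian {H : Type*} [NormedAddCommGroup H] [InnerProductSpace ℝ H]
    [MeasurableSpace H] (μ : Measure H) : Prop :=
  ∀ L : H →L[ℝ] ℝ, ∃ v : NNReal, μ.map L = ProbabilityTheory.gaussianReal 0 v

open Filter Metric ProbabilityTheory Real
open scoped NNReal ENNReal Topology
set_option maxHeartbeats 2000000
set_option synthInstance.maxHeartbeats 1000000

lemma meas_eventually_mem_le_liminf {α : Type*} [MeasurableSpace α] (μ : Measure α) (A : ℕ → Set α) :
    μ {x | ∀ᶠ n in atTop, x ∈ A n} ≤ Filter.liminf (fun n => μ (A n)) Filter.atTop := by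
  have hset : {x | ∀ᶠ n in atTop, x ∈ A n} = ⋃ N, ⋂ n, ⋂ (_ : n ≥ N), A n := by
    ext x
    simp [Filter.eventually_atTop, Set.mem_iUnion, Set.mem_iInter]
  rw [hset]
  have hmono : Monotone (fun N => ⋂ n, ⋂ (_ : n ≥ N), A n) := by
    intro N M hNM
    exact Set.iInter₂_mono' fun n hn => ⟨n, le_trans hNM hn, le_rfl⟩
  rw [Directed.measure_iUnion (hmono.directed_le)]
  rw [Filter.liminf_eq_iSup_iInf_of_nat]
  exact iSup_mono fun N => le_iInf₂ fun n hn => measure_mono (Set.biInter_subset_of_mem hn)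

lemma gaussianPDFReal_le_aux {v : ℝ≥0} (hv : v ≠ 0) {b x : ℝ} (hb : 0 < b) (hx : b ≤ |x|) :
    gaussianPDFReal 0 v x ≤ 2 / b := by
  have hvpos : (0:ℝ) < (v:ℝ) := by exact_mod_cast pos_iff_ne_zero.mpr hv
  have h2π : (1:ℝ) ≤ 2 * π := by nlinarith [Real.pi_gt_three]
  have hsv : (0:ℝ) < Real.sqrt v := Real.sqrt_pos.2 hvpos
  have hsq : Real.sqrt (v:ℝ) ≤ Real.sqrt (2 * π * v) := by
    apply Real.sqrt_le_sqrt; nlinarith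
  have hinv : (Real.sqrt (2 * π * (v:ℝ)))⁻¹ ≤ (Real.sqrt (v:ℝ))⁻¹ :=
    inv_anti₀ hsv hsq
  have hx2 : b ^ 2 ≤ x ^ 2 := by
    have := sq_abs x
    nlinarith [abs_nonneg x]
  have hexpnn : 0 ≤ rexp (-x ^ 2 / (2 * v)) := (Real.exp_pos _).le
  rw [gaussianPDFReal]
  simp only [sub_zero]
  rcases le_total (v:ℝ) (b ^ 2) with hcase | hcase
  · have h1 : rexp (-x ^ 2 / (2 * v)) ≤ rexp (-b ^ 2 / (2 * v)) := by
      apply Real.exp_le_exp.2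
      exact (div_le_div_iff_of_pos_right (by positivity)).mpr (by nlinarith)
    have ht : (0:ℝ) < b ^ 2 / (2 * v) := by positivity
    have h2 : rexp (-b ^ 2 / (2 * v)) ≤ 2 * v / b ^ 2 := by
      rw [neg_div, Real.exp_neg]
      have : b ^ 2 / (2 * v) ≤ rexp (b ^ 2 / (2 * v)) := by
        linarith [Real.add_one_le_exp (b ^ 2 / (2 * v))]
      calc (rexp (b ^ 2 / (2 * v)))⁻¹ ≤ (b ^ 2 / (2 * v))⁻¹ := inv_anti₀ ht this
        _ = 2 * v / b ^ 2 := by rw [inv_div]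
    have hsvb : Real.sqrt v ≤ b := by
      calc Real.sqrt (v:ℝ) ≤ Real.sqrt (b ^ 2) := Real.sqrt_le_sqrt hcase
        _ = b := Real.sqrt_sq hb.le
    calc (Real.sqrt (2 * π * v))⁻¹ * rexp (-x ^ 2 / (2 * v))
        ≤ (Real.sqrt v)⁻¹ * (2 * v / b ^ 2) := by
          apply mul_le_mul hinv (h1.trans h2) hexpnn (by positivity)
      _ = 2 * Real.sqrt v / b ^ 2 := by
          rw [eq_div_iff (by positivity)]
          field_simp
          nlinarith [Real.mul_self_sqrt hvpos.le]
      _ ≤ 2 * b / b ^ 2 := by gcongr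
      _ = 2 / b := by field_simp
  · have h1 : rexp (-x ^ 2 / (2 * v)) ≤ 1 := by
      rw [← Real.exp_zero]
      apply Real.exp_le_exp.2
      have h0 : (0:ℝ) ≤ x ^ 2 / (2 * v) := by positivity
      simp only [neg_div]
      linarith
      
    have hsvb : b ≤ Real.sqrt v := by
      calc b = Real.sqrt (b ^ 2) := (Real.sqrt_sq hb.le).symm
        _ ≤ Real.sqrt (v:ℝ) := Real.sqrt_le_sqrt hcase
    calc (Real.sqrt (2 * π * v))⁻¹ * rexp (-x ^ 2 / (2 * v))
        ≤ (Real.sqrt v)⁻¹ * 1 := mul_le_mul hinv h1 hexpnn (by positivity)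
      _ = (Real.sqrt v)⁻¹ := mul_one _
      _ ≤ b⁻¹ := inv_anti₀ hb hsvb
      _ ≤ 2 / b := by rw [div_eq_mul_inv]; nlinarith [inv_pos.2 hb]

lemma gaussianReal_closedBall_le_aux (v : ℝ≥0) {c ε b : ℝ} (hε : 0 < ε) (hb : 0 < b)
    (hsep : ∀ x ∈ closedBall c ε, b ≤ |x|) :
    gaussianReal 0 v (closedBall c ε) ≤ ENNReal.ofReal (2 / b * (2 * ε)) := by
  rcases eq_or_ne v 0 with rfl | hv
  · rw [gaussianReal_zero_var, Measure.dirac_apply' _ measurableSet_closedBall]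
    have h0 : (0:ℝ) ∉ closedBall c ε := by
      intro h
      have := hsep 0 h
      simp only [abs_zero] at this
      linarith
    simp [Set.indicator_of_notMem h0]
  · rw [gaussianReal_apply 0 hv]
    calc ∫⁻ x in closedBall c ε, gaussianPDF 0 v x
        ≤ ∫⁻ (_x : ℝ) in closedBall c ε, ENNReal.ofReal (2/b) := by
          refine setLIntegral_mono measurable_const fun x hx => ?_
          exact ENNReal.ofReal_le_ofReal (gaussianPDFReal_le_aux hv hb (hsep x hx))
      _ = ENNReal.ofReal (2/b) * volume (closedBall c ε) := by
          rw [setLIntegral_const, mul_comm] 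
      _ = ENNReal.ofReal (2/b) * ENNReal.ofReal (2*ε) := by rw [Real.volume_closedBall]
      _ = ENNReal.ofReal (2/b * (2*ε)) := (ENNReal.ofReal_mul (by positivity)).symm

lemma gaussianReal_closedBall_zero_le_aux {v : ℝ≥0} (hv : v ≠ 0) {ε : ℝ} (hε : 0 ≤ ε) :
    gaussianReal 0 v (closedBall 0 ε) ≤
      ENNReal.ofReal ((Real.sqrt (2*π*(v:ℝ)))⁻¹ * (2*ε)) := by
  have hvpos : (0:ℝ) < (v:ℝ) := by exact_mod_cast pos_iff_ne_zero.mpr hv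
  rw [gaussianReal_apply 0 hv]
  calc ∫⁻ x in closedBall (0:ℝ) ε, gaussianPDF 0 v x
      ≤ ∫⁻ (_x : ℝ) in closedBall (0:ℝ) ε, ENNReal.ofReal ((Real.sqrt (2*π*(v:ℝ)))⁻¹) := by
        refine setLIntegral_mono measurable_const fun x _ => ?_
        refine ENNReal.ofReal_le_ofReal ?_
        rw [gaussianPDFReal]
        simp only [sub_zero]
        have h1 : rexp (-x ^ 2 / (2 * v)) ≤ 1 := by
          rw [← Real.exp_zero]
          apply Real.exp_le_exp.2
          have h0 : (0:ℝ) ≤ x ^ 2 / (2 * v) := by positivity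
          simp only [neg_div]; linarith
        calc (Real.sqrt (2*π*(v:ℝ)))⁻¹ * rexp (-x ^ 2 / (2 * v))
            ≤ (Real.sqrt (2*π*(v:ℝ)))⁻¹ * 1 := by
              apply mul_le_mul_of_nonneg_left h1 (by positivity)
          _ = (Real.sqrt (2*π*(v:ℝ)))⁻¹ := mul_one _
    _ = ENNReal.ofReal ((Real.sqrt (2*π*(v:ℝ)))⁻¹) * volume (closedBall (0:ℝ) ε) := by
        rw [setLIntegral_const]
    _ = _ := by
        rw [Real.volume_closedBall, ← ENNReal.ofReal_mul (by positivity)]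

lemma gaussianReal_tail_le_aux {v : ℝ≥0} (hv : v ≠ 0) {δ : ℝ} (hδ : 0 < δ) :
    gaussianReal 0 v {x : ℝ | δ ≤ |x|} ≤
      ENNReal.ofReal (Real.sqrt 2 * rexp (-δ^2/(4*(v:ℝ)))) := by
  have hvpos : (0:ℝ) < (v:ℝ) := by exact_mod_cast pos_iff_ne_zero.mpr hv
  have hsne : Real.sqrt (2*π*(v:ℝ)) ≠ 0 := by positivity
  set C : ℝ := (Real.sqrt (2*π*(v:ℝ)))⁻¹ * rexp (-δ^2/(4*(v:ℝ))) with hC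
  have hCnn : 0 ≤ C := by positivity
  rw [gaussianReal_apply 0 hv]
  have hint : Integrable (fun x : ℝ => C * rexp (-(1/(4*(v:ℝ))) * x^2)) :=
    (integrable_exp_neg_mul_sq (by positivity)).const_mul C
  calc ∫⁻ x in {x : ℝ | δ ≤ |x|}, gaussianPDF 0 v x
      ≤ ∫⁻ x in {x : ℝ | δ ≤ |x|}, ENNReal.ofReal (C * rexp (-(1/(4*(v:ℝ))) * x^2)) := by
        refine setLIntegral_mono (by measurability) fun x hx => ?_
        refine ENNReal.ofReal_le_ofReal ?_
        rw [gaussianPDFReal]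
        simp only [sub_zero]
        have hx2 : δ ^ 2 ≤ x ^ 2 := by
          have h := sq_abs x
          have hd : δ ≤ |x| := hx
          nlinarith [abs_nonneg x]
        have key : rexp (-x ^ 2 / (2 * v)) ≤ rexp (-δ^2/(4*(v:ℝ))) * rexp (-(1/(4*(v:ℝ))) * x^2) := by
          rw [← Real.exp_add]
          apply Real.exp_le_exp.2
          have e1 : -x ^ 2 / (2 * (v:ℝ)) = -(2*x^2) / (4*(v:ℝ)) := by ring
          have e2 : -δ^2/(4*(v:ℝ)) + -(1/(4*(v:ℝ))) * x^2 = -(δ^2 + x^2)/(4*(v:ℝ)) := by ring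
          rw [e1, e2]
          exact (div_le_div_iff_of_pos_right (by positivity)).mpr (by nlinarith)
        calc (Real.sqrt (2*π*(v:ℝ)))⁻¹ * rexp (-x ^ 2 / (2 * v))
            ≤ (Real.sqrt (2*π*(v:ℝ)))⁻¹ * (rexp (-δ^2/(4*(v:ℝ))) * rexp (-(1/(4*(v:ℝ))) * x^2)) := by
              apply mul_le_mul_of_nonneg_left key (by positivity)
          _ = C * rexp (-(1/(4*(v:ℝ))) * x^2) := by rw [hC]; ring
    _ ≤ ∫⁻ x, ENNReal.ofReal (C * rexp (-(1/(4*(v:ℝ))) * x^2)) :=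
        setLIntegral_le_lintegral _ _
    _ = ENNReal.ofReal (∫ x, C * rexp (-(1/(4*(v:ℝ))) * x^2)) :=
        (ofReal_integral_eq_lintegral_ofReal hint (Filter.Eventually.of_forall fun x => by positivity)).symm
    _ = ENNReal.ofReal (C * Real.sqrt (π / (1/(4*(v:ℝ))))) := by
        rw [integral_const_mul, integral_gaussian]
    _ = ENNReal.ofReal (Real.sqrt 2 * rexp (-δ^2/(4*(v:ℝ)))) := by
        congr 1
        have h4 : π / (1/(4*(v:ℝ))) = 2 * (2*π*(v:ℝ)) := by field_simp; ring
        rw [h4, Real.sqrt_mul (by norm_num : (0:ℝ) ≤ 2), hC]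
        field_simp

/-- Lemma A.3: if `μ` is a non-degenerate centred Gaussian measure on `H = L²(D)` for a
domain `D ⊆ ℝ^d`, then for every `a ∈ ℝ` the level set `{z ∈ D | h(z) = a}` has Lebesgue
measure zero for `μ`-a.e. `h ∈ H`. -/
theorem gaussian_level_sets_null (d : ℕ) (D : Set (Fin d → ℝ))
    (hDopen : IsOpen D) (hDne : D.Nonempty)
    [MeasurableSpace (Lp ℝ 2 (volume.restrict D))]
    [BorelSpace (Lp ℝ 2 (volume.restrict D))]
    (μ : Measure (Lp ℝ 2 (volume.restrict D))) [IsProbabilityMeasure μ]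
    (hgauss : IsCenteredGaussian μ)
    (hnondeg : ∀ U : Set (Lp ℝ 2 (volume.restrict D)), IsOpen U → U.Nonempty → 0 < μ U)
    (a : ℝ) :
    ∀ᵐ h ∂μ, (volume.restrict D : Measure (Fin d → ℝ)) {z : Fin d → ℝ | (h : Lp ℝ 2 (volume.restrict D)) z = a} = 0 := by
  classical
  have hDmeas : MeasurableSet D := hDopen.measurableSet
  -- radii
  set r : ℕ → ℝ := fun n => ((n : ℝ) + 1)⁻¹ with hrdef
  have hrpos : ∀ n, 0 < r n := fun n => by positivity
  have hrtend : Tendsto r atTop (nhdsWithin 0 (Set.Ioi 0)) := by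
    apply tendsto_nhdsWithin_of_tendsto_nhds_of_eventually_within
    · have := tendsto_one_div_add_atTop_nhds_zero_nat (𝕜 := ℝ)
      simpa [hrdef, one_div] using this
    · exact Filter.Eventually.of_forall fun n => hrpos n
  have hν_le : ∀ s : Set (Fin d → ℝ), (volume.restrict D) s ≤ volume s :=
    fun s => Measure.restrict_le_self s
  have hνB : ∀ (n : ℕ) (z : Fin d → ℝ), (volume.restrict D) (closedBall z (r n)) ≠ ∞ :=
    fun n z => ((hν_le _).trans_lt measure_closedBall_lt_top).ne
  -- the indicator family and its continuity
  set χ : ℕ → (Fin d → ℝ) → Lp ℝ 2 (volume.restrict D) :=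
    fun n z => indicatorConstLp 2 measurableSet_closedBall (hνB n z) (1:ℝ) with hχdef
  have hχcont : ∀ n, Continuous fun z => χ n z := by
    intro n
    apply continuous_indicatorConstLp_set (by norm_num)
    intro z
    rw [ENNReal.tendsto_nhds_zero]
    intro ε hε
    -- shrinking annuli around the sphere
    set A : ℕ → Set (Fin d → ℝ) := fun k =>
      closedBall z (r n + ((k:ℝ)+1)⁻¹) \ closedBall z (r n - ((k:ℝ)+1)⁻¹) with hAdef
    have hAanti : Antitone A := by
      intro k k' hkk'
      have hinv : ((k':ℝ)+1)⁻¹ ≤ ((k:ℝ)+1)⁻¹ := by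
        apply inv_anti₀ (by positivity)
        have : (k:ℝ) ≤ (k':ℝ) := Nat.cast_le.2 hkk'
        linarith
      intro x hx
      refine ⟨closedBall_subset_closedBall (by linarith) hx.1, fun hmem => hx.2 ?_⟩
      exact closedBall_subset_closedBall (by linarith) hmem
    have hAint : (⋂ k, A k) ⊆ sphere z (r n) := by
      intro x hx
      simp only [Set.mem_iInter] at hx
      have h1 : dist x z ≤ r n := by
        have hseq : Tendsto (fun k : ℕ => r n + ((k:ℝ)+1)⁻¹) atTop (𝓝 (r n)) := by
          have := tendsto_one_div_add_atTop_nhds_zero_nat (𝕜 := ℝ)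
          simp only [one_div] at this
          simpa using tendsto_const_nhds.add this
        exact ge_of_tendsto' hseq fun k => (hx k).1
      have h2 : r n ≤ dist x z := by
        have hseq : Tendsto (fun k : ℕ => r n - ((k:ℝ)+1)⁻¹) atTop (𝓝 (r n)) := by
          have := tendsto_one_div_add_atTop_nhds_zero_nat (𝕜 := ℝ)
          simp only [one_div] at this
          simpa using tendsto_const_nhds.sub this
        refine le_of_tendsto' hseq fun k => ?_
        by_contra hcon
        push_neg at hcon
        exact (hx k).2 (mem_closedBall.2 hcon.le)
      exact le_antisymm h1 h2
    have hAfin : volume (A 0) ≠ ∞ :=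
      ((measure_mono Set.diff_subset).trans_lt measure_closedBall_lt_top).ne
    have hAtend : Tendsto (fun k => volume (A k)) atTop (𝓝 (volume (⋂ k, A k))) := by
      apply tendsto_measure_iInter_atTop
        (fun k => (measurableSet_closedBall.diff measurableSet_closedBall).nullMeasurableSet)
        hAanti ⟨0, hAfin⟩
    have hA0 : volume (⋂ k, A k) = 0 :=
      measure_mono_null hAint (Measure.addHaar_sphere_of_ne_zero _ _ (hrpos n).ne')
    rw [hA0] at hAtend
    obtain ⟨k, hk⟩ : ∃ k, volume (A k) < ε := (hAtend.eventually (gt_mem_nhds hε.bot_lt)).exists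
    have hball : Metric.ball z (((k:ℝ)+1)⁻¹) ∈ 𝓝 z := ball_mem_nhds z (by positivity)
    filter_upwards [hball] with y hy
    have hsub : symmDiff (closedBall y (r n)) (closedBall z (r n)) ⊆ A k := by
      intro x hx
      have hdyz : dist y z < ((k:ℝ)+1)⁻¹ := mem_ball.1 hy
      rcases Set.mem_symmDiff.1 hx with ⟨hx1, hx2⟩ | ⟨hx1, hx2⟩
      · constructor
        · have : dist x z ≤ dist x y + dist y z := dist_triangle x y z
          have hxy : dist x y ≤ r n := mem_closedBall.1 hx1
          exact mem_closedBall.2 (by linarith)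
        · intro hmem
          apply hx2
          have h1 := mem_closedBall.1 hmem
          have hδ : (0:ℝ) < ((k:ℝ)+1)⁻¹ := by positivity
          exact mem_closedBall.2 (by linarith)
      · constructor
        · have hxz : dist x z ≤ r n := mem_closedBall.1 hx1
          have hδ : (0:ℝ) < ((k:ℝ)+1)⁻¹ := by positivity
          exact mem_closedBall.2 (by linarith)
        · intro hmem
          apply hx2
          have h1 : dist x z ≤ r n - ((k:ℝ)+1)⁻¹ := mem_closedBall.1 hmem
          have h2 : dist x y ≤ dist x z + dist z y := dist_triangle x z y
          have h3 : dist z y = dist y z := dist_comm z y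
          exact mem_closedBall.2 (by linarith)
    exact le_trans (hν_le _) (le_trans (measure_mono hsub) hk.le)
  set c : ℕ → ℝ := fun n => ((volume (closedBall (0 : Fin d → ℝ) (r n))).toReal)⁻¹ with hcdef
  set L : ℕ → (Fin d → ℝ) → (Lp ℝ 2 (volume.restrict D) →L[ℝ] ℝ) :=
    fun n z => c n • (innerSL ℝ (χ n z)) with hLdef
  have hLapply : ∀ n z h', L n z h' = c n * (inner ℝ (χ n z) h' : ℝ) := by
    intro n z h'
    simp [hLdef]
  have hGcont : ∀ n, Continuous fun p : (Lp ℝ 2 (volume.restrict D)) × (Fin d → ℝ) => L n p.2 p.1 := by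
    intro n
    have heq : (fun p : (Lp ℝ 2 (volume.restrict D)) × (Fin d → ℝ) => L n p.2 p.1)
        = fun p => c n * (inner ℝ (χ n p.2) p.1 : ℝ) := by
      funext p; exact hLapply n p.2 p.1
    rw [heq]
    exact continuous_const.mul
      (continuous_inner.comp (((hχcont n).comp continuous_snd).prodMk continuous_fst))
  have hGmeas : ∀ n, Measurable fun p : (Lp ℝ 2 (volume.restrict D)) × (Fin d → ℝ) => L n p.2 p.1 :=
    fun n => (hGcont n).measurable
  -- the key sets
  set E : Set ((Lp ℝ 2 (volume.restrict D)) × (Fin d → ℝ)) :=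
    {p | Tendsto (fun n => L n p.2 p.1) atTop (𝓝 a)} with hEdef
  have hEmeas : MeasurableSet E := measurableSet_tendsto (𝓝 a) hGmeas
  set Conv : Set ((Lp ℝ 2 (volume.restrict D)) × (Fin d → ℝ)) :=
    {p | ∃ cc, Tendsto (fun n => L n p.2 p.1) atTop (𝓝 cc)} with hConvdef
  have hConvmeas : MeasurableSet Conv := measurableSet_exists_tendsto (l := atTop) hGmeas
  -- Lebesgue differentiation
  have hLeb : ∀ h' : Lp ℝ 2 (volume.restrict D), ∀ᵐ z ∂(volume.restrict D), Tendsto (fun n => L n z h') atTop (𝓝 (h' z)) := by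
    intro h'
    set f : (Fin d → ℝ) → ℝ := D.indicator h' with hfdef
    have hloc : LocallyIntegrable f volume := by
      rw [locallyIntegrable_iff]
      intro K hK
      haveI : IsFiniteMeasure ((volume.restrict D).restrict K) := by
        constructor
        rw [Measure.restrict_apply_univ]
        exact (hν_le K).trans_lt hK.measure_lt_top
      have hint : Integrable h' ((volume.restrict D).restrict K) :=
        ((Lp.memLp h').restrict K).integrable one_le_two
      rw [IntegrableOn, hfdef, integrable_indicator_iff hDmeas]
      rw [IntegrableOn, Measure.restrict_restrict hDmeas]
      rw [Measure.restrict_restrict hK.measurableSet] at hint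
      rwa [Set.inter_comm] at hint
    have lebAE := IsUnifLocDoublingMeasure.ae_tendsto_average
      (μ := (volume : Measure (Fin d → ℝ))) hloc 1
    filter_upwards [ae_restrict_of_ae lebAE, ae_restrict_mem hDmeas] with z hz hzD
    have hmem : ∀ᶠ j in (atTop : Filter ℕ), z ∈ closedBall z (1 * r j) :=
      Filter.Eventually.of_forall fun j => by
        rw [one_mul]
        exact mem_closedBall_self (hrpos j).le
    have ht := hz (fun _ => z) r hrtend hmem
    have hfz : f z = h' z := Set.indicator_of_mem hzD _
    rw [hfz] at ht
    refine ht.congr fun j => ?_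
    -- average equals L j z h'
    rw [setAverage_eq, hfdef, setIntegral_indicator hDmeas]
    have hL : L j z h' = c j * ∫ y in closedBall z (r j), h' y ∂(volume.restrict D) := by
      rw [hLapply]
      congr 1
      rw [hχdef]
      rw [MeasureTheory.L2.inner_indicatorConstLp_eq_setIntegral_inner]
      congr 1
      funext y
      simp [RCLike.inner_apply, starRingEnd_apply]
    rw [hL]
    have hsets : ∫ y in closedBall z (r j), h' y ∂(volume.restrict D)
        = ∫ y in closedBall z (r j) ∩ D, h' y ∂volume := by
      rw [Measure.restrict_restrict measurableSet_closedBall]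
    rw [hsets, smul_eq_mul]
    congr 1
    rw [hcdef]
    congr 1
    rw [measureReal_def, Measure.addHaar_closedBall_center]
  -- Gaussian variances
  set v : ℕ → (Fin d → ℝ) → ℝ≥0 := fun n z => (hgauss (L n z)).choose with hvdef
  have hvspec : ∀ n z, μ.map (L n z) = gaussianReal 0 (v n z) :=
    fun n z => (hgauss (L n z)).choose_spec
  have hmap : ∀ (n : ℕ) (z : Fin d → ℝ) (s : Set ℝ), MeasurableSet s →
      μ {h' | L n z h' ∈ s} = gaussianReal 0 (v n z) s := by
    intro n z s hs
    rw [← hvspec n z, Measure.map_apply (L n z).continuous.measurable hs]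
    rfl
  -- slice bound via liminf
  have hslice : ∀ (z : Fin d → ℝ) (ε : ℝ), 0 < ε →
      μ {h' | Tendsto (fun n => L n z h') atTop (𝓝 a)}
        ≤ liminf (fun n => gaussianReal 0 (v n z) (closedBall a ε)) atTop := by
    intro z ε hε
    have hsub : {h' : Lp ℝ 2 (volume.restrict D) | Tendsto (fun n => L n z h') atTop (𝓝 a)}
        ⊆ {h' | ∀ᶠ n in atTop, h' ∈ {h'' | L n z h'' ∈ closedBall a ε}} := by
      intro h' hh'
      exact hh' (closedBall_mem_nhds a hε)
    refine (measure_mono hsub).trans ?_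
    refine (meas_eventually_mem_le_liminf μ _).trans ?_
    apply le_of_eq
    congr 1
    funext n
    exact hmap n z _ measurableSet_closedBall
  -- case a ≠ 0
  have hpzero : a ≠ 0 → ∀ z, μ {h' | Tendsto (fun n => L n z h') atTop (𝓝 a)} = 0 := by
    intro ha z
    have hapos : 0 < |a| := abs_pos.2 ha
    have key : ∀ k : ℕ, μ {h' | Tendsto (fun n => L n z h') atTop (𝓝 a)}
        ≤ ENNReal.ofReal (2 / (|a|/2) * (2 * (|a| / (2*((k:ℝ)+1))))) := by
      intro k
      set ε : ℝ := |a| / (2*((k:ℝ)+1)) with hεdef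
      have hε : 0 < ε := by positivity
      have hεle : ε ≤ |a|/2 := by
        rw [hεdef]
        rw [div_le_div_iff₀ (by positivity) (by positivity)]
        nlinarith [Nat.cast_nonneg (α := ℝ) k]
      refine (hslice z ε hε).trans ?_
      refine Filter.liminf_le_of_frequently_le (Filter.Frequently.of_forall fun n => ?_)
      apply gaussianReal_closedBall_le_aux (v n z) hε (by positivity : (0:ℝ) < |a|/2)
      intro x hx
      have hd : |x - a| ≤ ε := by
        have := mem_closedBall.1 hx
        rwa [Real.dist_eq] at this
      have habs : |a| - |x| ≤ |x - a| := by
        have h1 := abs_sub_abs_le_abs_sub a x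
        have h2 : |a - x| = |x - a| := abs_sub_comm a x
        linarith
      linarith
    have htend : Tendsto (fun k : ℕ => ENNReal.ofReal (2 / (|a|/2) * (2 * (|a| / (2*((k:ℝ)+1)))))) atTop (𝓝 0) := by
      have hre : Tendsto (fun k : ℕ => 2 / (|a|/2) * (2 * (|a| / (2*((k:ℝ)+1))))) atTop (𝓝 0) := by
        have h1 : (fun k : ℕ => 2 / (|a|/2) * (2 * (|a| / (2*((k:ℝ)+1)))))
            = fun k : ℕ => (2 / (|a|/2) * |a|) * (1 / ((k:ℝ)+1)) := by
          funext k
          field_simp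
        rw [h1]
        have := tendsto_one_div_add_atTop_nhds_zero_nat (𝕜 := ℝ)
        simpa using this.const_mul (2 / (|a|/2) * |a|)
      have := ENNReal.tendsto_ofReal hre
      simpa using this
    exact le_zero_iff.mp (ge_of_tendsto' htend key)
  -- variance goes to zero on "bad" points (case a = 0)
  have hv0 : a = 0 → ∀ z, μ {h' | Tendsto (fun n => L n z h') atTop (𝓝 a)} ≠ 0 →
      Tendsto (fun n => ((v n z : ℝ))) atTop (𝓝 0) := by
    intro ha z hz
    set q : ℝ := (μ {h' | Tendsto (fun n => L n z h') atTop (𝓝 a)}).toReal with hqdef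
    have hqpos : 0 < q := ENNReal.toReal_pos hz (measure_ne_top μ _)
    have key : ∀ C : ℝ, 0 < C → ∀ᶠ n in atTop, (v n z : ℝ) < C := by
      intro C hC
      set ε : ℝ := q * Real.sqrt (2*π*C) / 4 with hεdef
      have hsC : 0 < Real.sqrt (2*π*C) := Real.sqrt_pos.2 (by positivity)
      have hε : 0 < ε := by positivity
      have hlim : ENNReal.ofReal (q/2)
          < liminf (fun n => gaussianReal 0 (v n z) (closedBall a ε)) atTop := by
        refine lt_of_lt_of_le ?_ (hslice z ε hε)
        conv_rhs => rw [← ENNReal.ofReal_toReal (measure_ne_top μ _)]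
        rw [ENNReal.ofReal_lt_ofReal_iff hqpos]
        linarith
      have hev := Filter.eventually_lt_of_lt_liminf hlim
      filter_upwards [hev] with n hn
      by_contra hcon
      push_neg at hcon
      have hvne : v n z ≠ 0 := by
        intro h0
        rw [h0] at hcon
        push_cast at hcon
        linarith
      have hb := gaussianReal_closedBall_zero_le_aux hvne hε.le
      rw [ha] at hn
      have hlt : ENNReal.ofReal (q/2)
          < ENNReal.ofReal ((Real.sqrt (2*π*((v n z : ℝ))))⁻¹ * (2*ε)) := hn.trans_le hb
      have hvpos : (0:ℝ) < (v n z : ℝ) := by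
        have := pos_iff_ne_zero.mpr hvne
        exact_mod_cast this
      have hsv : 0 < Real.sqrt (2*π*((v n z : ℝ))) := Real.sqrt_pos.2 (by positivity)
      have hreal : q/2 < (Real.sqrt (2*π*((v n z : ℝ))))⁻¹ * (2*ε) :=
        (ENNReal.ofReal_lt_ofReal_iff (by positivity)).1 hlt
      have hmono : Real.sqrt (2*π*C) ≤ Real.sqrt (2*π*((v n z : ℝ))) := by
        apply Real.sqrt_le_sqrt
        nlinarith [Real.pi_pos]
      have hle : (Real.sqrt (2*π*((v n z : ℝ))))⁻¹ * (2*ε) ≤ q/2 := by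
        have h1 : (Real.sqrt (2*π*((v n z : ℝ))))⁻¹ ≤ (Real.sqrt (2*π*C))⁻¹ :=
          inv_anti₀ hsC hmono
        calc (Real.sqrt (2*π*((v n z : ℝ))))⁻¹ * (2*ε)
            ≤ (Real.sqrt (2*π*C))⁻¹ * (2*ε) := by
              apply mul_le_mul_of_nonneg_right h1 (by positivity)
          _ = q/2 := by
              rw [hεdef]
              field_simp
              ring
      linarith
    refine tendsto_order.2 ⟨fun b hb => ?_, fun b hb => key b hb⟩
    exact Filter.Eventually.of_forall fun n => lt_of_lt_of_le hb (v n z).coe_nonneg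
  -- vanishing variance kills nonzero limits
  have hzero_lim : ∀ z, Tendsto (fun n => ((v n z : ℝ))) atTop (𝓝 0) →
      μ {h' | ∃ cc, cc ≠ 0 ∧ Tendsto (fun n => L n z h') atTop (𝓝 cc)} = 0 := by
    intro z hv
    have hsub : {h' : Lp ℝ 2 (volume.restrict D) | ∃ cc, cc ≠ 0 ∧ Tendsto (fun n => L n z h') atTop (𝓝 cc)}
        ⊆ ⋃ k : ℕ, {h' | ∀ᶠ n in atTop, h' ∈ {h'' | ((k:ℝ)+1)⁻¹ ≤ |L n z h''|}} := by
      rintro h' ⟨cc, hcc, hT⟩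
      have hccpos : 0 < |cc| := abs_pos.2 hcc
      obtain ⟨k, hk⟩ : ∃ k : ℕ, ((k:ℝ)+1)⁻¹ < |cc| := by
        obtain ⟨k, hk⟩ := exists_nat_gt (|cc|)⁻¹
        refine ⟨k, ?_⟩
        rw [inv_lt_comm₀ (by positivity) hccpos]
        linarith
      refine Set.mem_iUnion.2 ⟨k, ?_⟩
      have habs : Tendsto (fun n => |L n z h'|) atTop (𝓝 (|cc|)) := hT.abs
      have hev : ∀ᶠ n in atTop, ((k:ℝ)+1)⁻¹ < |L n z h'| :=
        habs (Ioi_mem_nhds hk)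
      exact hev.mono fun n hn => le_of_lt hn
    refine measure_mono_null hsub (measure_iUnion_null fun k => ?_)
    have hδ : (0:ℝ) < ((k:ℝ)+1)⁻¹ := by positivity
    have hmeasδ : MeasurableSet {x : ℝ | ((k:ℝ)+1)⁻¹ ≤ |x|} :=
      (isClosed_le continuous_const continuous_abs).measurableSet
    refine le_zero_iff.mp ?_
    refine (meas_eventually_mem_le_liminf μ _).trans ?_
    have h2 : ∀ n : ℕ, μ {h'' | ((k:ℝ)+1)⁻¹ ≤ |L n z h''|}
        = gaussianReal 0 (v n z) {x : ℝ | ((k:ℝ)+1)⁻¹ ≤ |x|} :=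
      fun n => hmap n z _ hmeasδ
    have h3 : Tendsto (fun n => gaussianReal 0 (v n z) {x : ℝ | ((k:ℝ)+1)⁻¹ ≤ |x|}) atTop (𝓝 0) := by
      rw [ENNReal.tendsto_nhds_zero]
      intro ε' hε'
      -- choose M with ofReal (√2 exp (-(M+1))) < ε'
      have hM0 : Tendsto (fun M : ℕ => ENNReal.ofReal (Real.sqrt 2 * rexp (-((M:ℝ)+1)))) atTop (𝓝 0) := by
        have h4 : Tendsto (fun M : ℕ => Real.sqrt 2 * rexp (-((M:ℝ)+1))) atTop (𝓝 0) := by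
          have h5 : Tendsto (fun M : ℕ => -((M:ℝ)+1)) atTop atBot := by
            apply tendsto_neg_atBot_iff.2
            exact tendsto_atTop_add_const_right atTop 1 tendsto_natCast_atTop_atTop
          have h6 : Tendsto (fun M : ℕ => rexp (-((M:ℝ)+1))) atTop (𝓝 0) :=
            Real.tendsto_exp_atBot.comp h5
          simpa using h6.const_mul (Real.sqrt 2)
        have := ENNReal.tendsto_ofReal h4
        simpa using this
      obtain ⟨M, hM⟩ := (hM0.eventually (gt_mem_nhds hε'.bot_lt)).exists
      set w : ℝ := (((k:ℝ)+1)⁻¹)^2 / (4*((M:ℝ)+1)) with hwdef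
      have hw : 0 < w := by positivity
      have hevw : ∀ᶠ n in atTop, (v n z : ℝ) < w := hv (Iio_mem_nhds hw)
      filter_upwards [hevw] with n hn
      rcases eq_or_ne (v n z) 0 with h0 | h0
      · rw [h0, gaussianReal_zero_var, Measure.dirac_apply' _ hmeasδ]
        have h00 : (0:ℝ) ∉ {x : ℝ | ((k:ℝ)+1)⁻¹ ≤ |x|} := by
          simp only [Set.mem_setOf_eq, abs_zero, not_le]
          exact hδ
        simp [Set.indicator_of_notMem h00]
      · refine (gaussianReal_tail_le_aux h0 hδ).trans (le_trans ?_ hM.le)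
        apply ENNReal.ofReal_le_ofReal
        have hvpos : (0:ℝ) < (v n z : ℝ) := by
          have := pos_iff_ne_zero.mpr h0
          exact_mod_cast this
        have hexp : rexp (-(((k:ℝ)+1)⁻¹)^2/(4*((v n z : ℝ)))) ≤ rexp (-((M:ℝ)+1)) := by
          apply Real.exp_le_exp.2
          rw [neg_div, neg_le_neg_iff]
          rw [le_div_iff₀ (by positivity)]
          have : (v n z : ℝ) * (4*((M:ℝ)+1)) < w * (4*((M:ℝ)+1)) := by
            apply mul_lt_mul_of_pos_right hn (by positivity)
          rw [hwdef] at this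
          rw [div_mul_cancel₀] at this
          · nlinarith
          · positivity
        exact mul_le_mul_of_nonneg_left hexp (Real.sqrt_nonneg 2)
    refine le_of_eq ?_
    calc liminf (fun n => μ {h'' | ((k:ℝ)+1)⁻¹ ≤ |L n z h''|}) atTop
        = liminf (fun n => gaussianReal 0 (v n z) {x : ℝ | ((k:ℝ)+1)⁻¹ ≤ |x|}) atTop := by
          congr 1; funext n; exact h2 n
      _ = 0 := h3.liminf_eq
  -- almost every z has null slice
  have hz_ae : ∀ᵐ z ∂(volume.restrict D), μ ((fun h' => (h', z)) ⁻¹' E) = 0 := by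
    rcases eq_or_ne a 0 with ha | ha
    case inr => exact Filter.Eventually.of_forall fun z => hpzero ha z
    -- a = 0 from here on
    have hconv_ae : ∀ᵐ z ∂(volume.restrict D), μ ((fun h' => (h', z)) ⁻¹' Convᶜ) = 0 := by
      have hprod : (μ.prod (volume.restrict D)) Convᶜ = 0 := by
        rw [Measure.prod_apply hConvmeas.compl]
        have hz0 : ∀ h', (volume.restrict D) (Prod.mk h' ⁻¹' Convᶜ) = 0 := by
          intro h'
          have hae : ∀ᵐ z ∂(volume.restrict D), (h', z) ∈ Conv :=
            (hLeb h').mono fun z hz => ⟨h' z, hz⟩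
          exact ae_iff.mp hae
        simp only [hz0]
        exact lintegral_zero
      rw [Measure.prod_apply_symm hConvmeas.compl] at hprod
      have hcv := (lintegral_eq_zero_iff (measurable_measure_prodMk_right hConvmeas.compl)).mp hprod
      filter_upwards [hcv] with z hz
      simpa using hz
    set W : Set (Fin d → ℝ) := {z | μ ((fun h' => (h', z)) ⁻¹' E) ≠ 0} with hWdef
    have hWmeas : MeasurableSet W :=
      (measurable_measure_prodMk_right hEmeas) (measurableSet_singleton 0).compl
    have hWnull : (volume.restrict D) W = 0 := by
      by_contra hW
      obtain ⟨k, hSne⟩ : ∃ k : ℕ, (volume.restrict D) (W ∩ Metric.ball 0 ((k:ℝ)+1)) ≠ 0 := by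
        by_contra hall
        push_neg at hall
        apply hW
        have hcover : W ⊆ ⋃ k : ℕ, W ∩ Metric.ball 0 ((k:ℝ)+1) := by
          intro x hx
          obtain ⟨k, hk⟩ := exists_nat_gt (dist x 0)
          exact Set.mem_iUnion.2 ⟨k, hx, mem_ball.2 (by linarith)⟩
        exact measure_mono_null hcover (measure_iUnion_null hall)
      set S : Set (Fin d → ℝ) := W ∩ Metric.ball 0 ((k:ℝ)+1) with hSdef
      have hSmeas : MeasurableSet S := hWmeas.inter measurableSet_ball
      have hSfin : (volume.restrict D) S ≠ ∞ :=
        ((le_trans (measure_mono Set.inter_subset_right) (hν_le _)).trans_lt measure_ball_lt_top).ne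
      have hkey : ∀ᵐ z ∂(volume.restrict D), z ∈ S → μ ((fun h' => (h', z)) ⁻¹' Eᶜ) = 0 := by
        filter_upwards [hconv_ae] with z hconvz hzS
        have hWz : μ ((fun h' => (h', z)) ⁻¹' E) ≠ 0 := hzS.1
        have hvz := hv0 ha z hWz
        have hlim0 := hzero_lim z hvz
        have hsub : ((fun h' => (h', z)) ⁻¹' Eᶜ) ⊆
            ((fun h' => (h', z)) ⁻¹' Convᶜ)
              ∪ {h' | ∃ cc, cc ≠ 0 ∧ Tendsto (fun n => L n z h') atTop (𝓝 cc)} := by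
          intro h' hh'
          by_cases hc : (h', z) ∈ Conv
          · obtain ⟨cc, hcc⟩ := hc
            right
            refine ⟨cc, fun h0 => ?_, hcc⟩
            apply hh'
            show Tendsto (fun n => L n z h') atTop (𝓝 a)
            have haeq : a = cc := by rw [ha, ← h0]
            rw [haeq]
            exact hcc
          · left; exact hc
        exact measure_mono_null hsub (measure_union_null hconvz hlim0)
      have hprodS : (μ.prod ((volume.restrict D).restrict S)) Eᶜ = 0 := by
        rw [Measure.prod_apply_symm hEmeas.compl]
        rw [lintegral_eq_zero_iff (measurable_measure_prodMk_right hEmeas.compl)]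
        exact (ae_restrict_iff' hSmeas).2 hkey
      have hfwd : ∀ᵐ h' ∂μ, ((volume.restrict D).restrict S) (Prod.mk h' ⁻¹' Eᶜ) = 0 := by
        rw [Measure.prod_apply hEmeas.compl] at hprodS
        have hfw := (lintegral_eq_zero_iff (measurable_measure_prodMk_left hEmeas.compl)).mp hprodS
        filter_upwards [hfw] with h' hh'
        simpa using hh'
      set χS : Lp ℝ 2 (volume.restrict D) := indicatorConstLp 2 hSmeas hSfin (1:ℝ) with hχS
      have hinner0 : ∀ᵐ h' ∂μ, (inner ℝ χS h' : ℝ) = 0 := by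
        filter_upwards [hfwd] with h' hh'
        have hae1 : ∀ᵐ z ∂((volume.restrict D).restrict S), (h', z) ∈ E := by
          rw [ae_iff]
          exact hh'
        have hae2 : ∀ᵐ z ∂((volume.restrict D).restrict S),
            Tendsto (fun n => L n z h') atTop (𝓝 (h' z)) :=
          ae_restrict_of_ae (hLeb h')
        have hae3 : ∀ᵐ z ∂((volume.restrict D).restrict S), (h' : Lp ℝ 2 (volume.restrict D)) z = 0 := by
          filter_upwards [hae1, hae2] with z h1 h2
          have := tendsto_nhds_unique h2 h1
          rwa [ha] at this
        have heq : (inner ℝ χS h' : ℝ) = ∫ z in S, h' z ∂(volume.restrict D) := by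
          rw [hχS, MeasureTheory.L2.inner_indicatorConstLp_eq_setIntegral_inner]
          congr 1
          funext y
          simp [RCLike.inner_apply, starRingEnd_apply]
        rw [heq]
        exact integral_eq_zero_of_ae hae3
      set U : Set (Lp ℝ 2 (volume.restrict D)) := {h' | (inner ℝ χS h' : ℝ) ≠ 0} with hUdef
      have hUopen : IsOpen U := by
        have hcontinner : Continuous fun h' : Lp ℝ 2 (volume.restrict D) => (inner ℝ χS h' : ℝ) :=
          Continuous.inner continuous_const continuous_id
        exact isOpen_compl_singleton.preimage hcontinner
      have hUne : U.Nonempty := by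
        refine ⟨χS, ?_⟩
        simp only [hUdef, Set.mem_setOf_eq]
        rw [real_inner_self_eq_norm_sq]
        have hnorm : ‖χS‖ ≠ 0 := by
          rw [hχS, norm_indicatorConstLp (by norm_num) (by norm_num)]
          have hpos : 0 < ((volume.restrict D) S).toReal := ENNReal.toReal_pos hSne hSfin
          simp only [norm_one, one_mul]
          positivity
        exact pow_ne_zero 2 hnorm
      have hμU : μ U = 0 := ae_iff.mp hinner0
      exact absurd (hnondeg U hUopen hUne) (by rw [hμU]; exact lt_irrefl 0)
    have hnotW : ∀ᵐ z ∂(volume.restrict D), z ∉ W := by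
      rw [ae_iff]
      simpa using hWnull
    filter_upwards [hnotW] with z hz
    by_contra hne
    exact hz hne
  -- final Tonelli argument
  have hEz0 : (μ.prod (volume.restrict D)) E = 0 := by
    rw [Measure.prod_apply_symm hEmeas]
    rw [lintegral_eq_zero_iff (measurable_measure_prodMk_right hEmeas)]
    exact hz_ae
  have hEh : ∀ᵐ h' ∂μ, (volume.restrict D) (Prod.mk h' ⁻¹' E) = 0 := by
    rw [Measure.prod_apply hEmeas] at hEz0
    exact (lintegral_eq_zero_iff (measurable_measure_prodMk_left hEmeas)).mp hEz0
  filter_upwards [hEh] with h' hh'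
  have hcongr : (volume.restrict D) {z | (h' : Lp ℝ 2 (volume.restrict D)) z = a} = (volume.restrict D) (Prod.mk h' ⁻¹' E) := by
    apply measure_congr
    rw [eventuallyEq_set]
    filter_upwards [hLeb h'] with z hz
    simp only [Set.mem_setOf_eq, Set.mem_preimage, hEdef]
    constructor
    · intro hza
      rw [← hza]
      exact hz
    · intro hE
      exact tendsto_nhds_unique hz hE
  rw [hcongr]
  exact hh'
end

section
/- Let H be a Hilbert space, φ, ψ ∈ H with ‖φ‖ = ‖ψ‖ = 1 and φ ≠ ψ, φ ≠ −ψ. Define J : H → H as the identity on the orthogonal complement of span{φ,ψ} and on span{φ,ψ} by J(ψ) = φ and J((φ − ⟨ψ,φ⟩ψ)/√(1−⟨φ,ψ⟩²)) = (⟨φ,ψ⟩φ − ψ)/√(1−⟨φ,ψ⟩²). Then J is an isometric isomorphism and the operator norm satisfies ‖J − id‖² ≤ ‖φ − ψ‖² + 2(1 − ⟨ψ,φ⟩). -/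
open MeasureTheory RealInnerProductSpace

lemma rot_aux {H : Type*} [NormedAddCommGroup H] [InnerProductSpace ℝ H]
    (e₁ e₂ : H) (a s : ℝ)
    (h1 : ⟪e₁, e₁⟫ = 1) (h2 : ⟪e₂, e₂⟫ = 1) (h12 : ⟪e₁, e₂⟫ = 0)
    (has : a ^ 2 + s ^ 2 = 1) :
    ∃ J : H ≃ₗᵢ[ℝ] H,
      (∀ u : H, J u = u + ⟪e₁, u⟫ • ((a • e₁ + s • e₂) - e₁)
          + ⟪e₂, u⟫ • (((-s) • e₁ + a • e₂) - e₂)) ∧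
      (∀ u : H, ‖J u - u‖ ^ 2 ≤ (2 - 2 * a) * ‖u‖ ^ 2) := by
  have h21 : ⟪e₂, e₁⟫ = 0 := by rw [real_inner_comm]; exact h12
  have hs2 : s ^ 2 = 1 - a ^ 2 := by linarith
  let T : H → H := fun u => u + ⟪e₁, u⟫ • ((a • e₁ + s • e₂) - e₁)
      + ⟪e₂, u⟫ • (((-s) • e₁ + a • e₂) - e₂)
  let T' : H → H := fun u => u + ⟪a • e₁ + s • e₂, u⟫ • (e₁ - (a • e₁ + s • e₂))
      + ⟪(-s) • e₁ + a • e₂, u⟫ • (e₂ - ((-s) • e₁ + a • e₂))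
  have hnorm : ∀ u : H, ⟪T u, T u⟫ = ⟪u, u⟫ := by
    intro u
    simp only [T, inner_add_left, inner_add_right, inner_sub_left, inner_sub_right,
      inner_smul_left, inner_smul_right, h1, h2, h12, h21, real_inner_comm u e₁,
      real_inner_comm u e₂, conj_trivial]
    ring_nf
    nlinarith [hs2, sq_nonneg (⟪e₁,u⟫ + ⟪e₂,u⟫)]
  have hleft : ∀ u : H, T' (T u) = u := by
    intro u
    simp only [T, T', inner_add_left, inner_add_right, inner_sub_left, inner_sub_right,
      inner_smul_left, inner_smul_right, h1, h2, h12, h21, conj_trivial]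
    match_scalars
    · ring_nf
    · linear_combination ((1 - a) * ⟪e₁, u⟫ + s * ⟪e₂, u⟫) * hs2
    · linear_combination ((1 - a) * ⟪e₂, u⟫ - s * ⟪e₁, u⟫) * hs2
  have hright : ∀ u : H, T (T' u) = u := by
    intro u
    simp only [T, T', inner_add_left, inner_add_right, inner_sub_left, inner_sub_right,
      inner_smul_left, inner_smul_right, h1, h2, h12, h21, conj_trivial]
    match_scalars
    · ring_nf
    · linear_combination ((1 - a) * ⟪e₁, u⟫ + s * ⟪e₂, u⟫) * hs2
    · linear_combination ((1 - a) * ⟪e₂, u⟫ - s * ⟪e₁, u⟫) * hs2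
  let Tl : H ≃ₗ[ℝ] H :=
    { toFun := T
      invFun := T'
      left_inv := hleft
      right_inv := hright
      map_add' := by
        intro u v
        simp only [T, inner_add_right, add_smul]
        abel
      map_smul' := by
        intro c u
        simp only [T, inner_smul_right, RingHom.id_apply, smul_add, smul_smul]
        try module }
  refine ⟨{ Tl with norm_map' := ?_ }, ?_, ?_⟩
  · intro u
    show ‖T u‖ = ‖u‖
    have := hnorm u
    rw [real_inner_self_eq_norm_sq, real_inner_self_eq_norm_sq] at this
    nlinarith [this, norm_nonneg (T u), norm_nonneg u]
  · intro u; rfl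
  · intro u
    have hJu : (Tl u : H) - u = ⟪e₁, u⟫ • ((a • e₁ + s • e₂) - e₁)
        + ⟪e₂, u⟫ • (((-s) • e₁ + a • e₂) - e₂) := by
      show T u - u = _
      simp only [T]; abel
    have hbessel : ⟪e₁, u⟫ ^ 2 + ⟪e₂, u⟫ ^ 2 ≤ ‖u‖ ^ 2 := by
      have h0 : (0:ℝ) ≤ ⟪u - ⟪e₁, u⟫ • e₁ - ⟪e₂, u⟫ • e₂, u - ⟪e₁, u⟫ • e₁ - ⟪e₂, u⟫ • e₂⟫ :=
        real_inner_self_nonneg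
      simp only [inner_sub_left, inner_sub_right, inner_smul_left, inner_smul_right,
        h1, h2, h12, h21, real_inner_comm u e₁, real_inner_comm u e₂, conj_trivial] at h0
      rw [show ⟪u,u⟫ = (‖u‖:ℝ) ^ 2 from real_inner_self_eq_norm_sq u] at h0
      rw [real_inner_comm u e₁, real_inner_comm u e₂]
      nlinarith [h0]
    have hns : ‖(Tl u : H) - u‖ ^ 2 = (2 - 2 * a) * (⟪e₁, u⟫ ^ 2 + ⟪e₂, u⟫ ^ 2) := by
      rw [← real_inner_self_eq_norm_sq, hJu]
      simp only [inner_add_left, inner_add_right, inner_sub_left, inner_sub_right,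
        inner_smul_left, inner_smul_right, h1, h2, h12, h21, conj_trivial]
      ring_nf
      linear_combination (⟪e₁, u⟫ ^ 2 + ⟪e₂, u⟫ ^ 2) * hs2
    show ‖(Tl u : H) - u‖ ^ 2 ≤ _
    rw [hns]
    have ha1 : a ≤ 1 := by nlinarith [sq_nonneg s, sq_nonneg a]
    nlinarith [hbessel, sq_nonneg (‖u‖)]

/-- Remark 4.1: there exists a rotation `J` of a Hilbert space mapping `ψ` to `φ`, acting
as described on `span{φ,ψ}` and as the identity on its orthogonal complement, with
`‖J − id‖² ≤ ‖φ − ψ‖² + 2(1 − ⟨ψ,φ⟩)`. -/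
theorem rotation_close_to_identity
    {H : Type*} [NormedAddCommGroup H] [InnerProductSpace ℝ H]
    (φ ψ : H) (hφ : ‖φ‖ = 1) (hψ : ‖ψ‖ = 1) (hne : φ ≠ ψ) (hne' : φ ≠ -ψ) :
    ∃ J : H ≃ₗᵢ[ℝ] H,
      J ψ = φ ∧
      J ((Real.sqrt (1 - ⟪φ, ψ⟫ ^ 2))⁻¹ • (φ - ⟪ψ, φ⟫ • ψ)) =
        (Real.sqrt (1 - ⟪φ, ψ⟫ ^ 2))⁻¹ • (⟪φ, ψ⟫ • φ - ψ) ∧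
      (∀ u : H, ⟪u, φ⟫ = 0 → ⟪u, ψ⟫ = 0 → J u = u) ∧
      ∀ u : H, ‖J u - u‖ ^ 2 ≤ (‖φ - ψ‖ ^ 2 + 2 * (1 - ⟪ψ, φ⟫)) * ‖u‖ ^ 2 := by
  rw [show (⟪ψ, φ⟫ : ℝ) = ⟪φ, ψ⟫ from real_inner_comm φ ψ]
  set a : ℝ := ⟪φ, ψ⟫ with ha
  have hφφ : ⟪φ, φ⟫ = (1:ℝ) := by rw [real_inner_self_eq_norm_sq, hφ]; norm_num
  have h1 : ⟪ψ, ψ⟫ = (1:ℝ) := by rw [real_inner_self_eq_norm_sq, hψ]; norm_num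
  have ha1 : a < 1 := by
    rcases lt_or_eq_of_le (real_inner_le_norm φ ψ) with h | h
    · rw [hφ, hψ] at h; rw [ha]; simpa using h
    · exact absurd ((inner_eq_one_iff_of_norm_eq_one (𝕜 := ℝ) hφ hψ).1 (by rw [h, hφ, hψ]; norm_num))
        hne
  have ha2 : -1 < a := by
    have hnψ : ‖-ψ‖ = 1 := by rwa [norm_neg]
    have hle : ⟪φ, -ψ⟫ ≤ ‖φ‖ * ‖-ψ‖ := real_inner_le_norm φ (-ψ)
    rw [inner_neg_right, hφ, hnψ] at hle
    rcases lt_or_eq_of_le hle with h | h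
    · rw [ha]; linarith
    · exact absurd ((inner_eq_one_iff_of_norm_eq_one (𝕜 := ℝ) hφ hnψ).1
        (by rw [inner_neg_right, h]; norm_num)) hne'
  have h1a : 0 < 1 - a ^ 2 := by nlinarith
  set s : ℝ := Real.sqrt (1 - a ^ 2) with hsdef
  have hs0 : 0 < s := Real.sqrt_pos.2 h1a
  have hs2 : s ^ 2 = 1 - a ^ 2 := Real.sq_sqrt h1a.le
  have has : a ^ 2 + s ^ 2 = 1 := by rw [hs2]; ring
  set e₂ : H := s⁻¹ • (φ - a • ψ) with he₂
  have h2 : ⟪e₂, e₂⟫ = (1:ℝ) := by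
    simp only [he₂, inner_smul_left, inner_smul_right, inner_sub_left, inner_sub_right,
      hφφ, h1, real_inner_comm φ ψ, ← ha, conj_trivial]
    field_simp
    linear_combination -hs2
  have h12 : ⟪ψ, e₂⟫ = (0:ℝ) := by
    simp only [he₂, inner_smul_right, inner_sub_right, h1, real_inner_comm φ ψ, ← ha]
    ring
  have h21 : ⟪e₂, ψ⟫ = (0:ℝ) := by rw [real_inner_comm]; exact h12
  obtain ⟨J, hJ, hb⟩ := rot_aux ψ e₂ a s h1 h2 h12 has
  have hf1 : a • ψ + s • e₂ = φ := by
    rw [he₂, smul_smul, mul_inv_cancel₀ hs0.ne', one_smul]; abel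
  refine ⟨J, ?_, ?_, ?_, ?_⟩
  · rw [hJ ψ, h1, h21, hf1]
    simp
  · rw [hJ e₂, h2, h12, hf1]
    simp only [one_smul, zero_smul, add_zero, zero_add, smul_zero]
    rw [he₂]
    match_scalars
    · field_simp
      ring
    · field_simp
      linear_combination -hs2
  · intro u hu1 hu2
    have hψu : ⟪ψ, u⟫ = (0:ℝ) := by rw [real_inner_comm]; exact hu2
    have he₂u : ⟪e₂, u⟫ = (0:ℝ) := by
      rw [he₂, real_inner_comm]
      simp only [inner_smul_right, inner_sub_right, inner_smul_left, conj_trivial, hu1, hu2]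
      ring
    rw [hJ u, hψu, he₂u]
    simp
  · intro u
    have hd : ‖φ - ψ‖ ^ 2 = 2 - 2 * a := by
      rw [norm_sub_sq_real, hφ, hψ, ← ha]; ring
    have := hb u
    nlinarith [sq_nonneg ‖u‖]
end

section
/- Let D ⊂ ℝ^d be bounded open with exhausting sets D_N as above, G_N = N D_N ∩ ℤ^d, and Ξ satisfying the partition-of-unity condition. Then for all f, g ∈ C(cl D), lim_{N→∞} N^d ∑_{p∈G_N} ⟨Ξ(N·−p), f⟩_{L²(D)} ⟨Ξ(N·−p), g⟩_{L²(D)} = ⟨f, g⟩_{L²(D)}. -/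
open MeasureTheory Filter Topology

/-- Equation (4.1): for `f, g ∈ C(cl D)`,
`N^d ∑_{p∈G_N} ⟨Ξ(N·−p), f⟩_{L²(D)} ⟨Ξ(N·−p), g⟩_{L²(D)} → ⟨f,g⟩_{L²(D)}` as `N → ∞`. -/
theorem riemann_sum_inner_product_convergence
    (d : ℕ) (D : Set (Fin d → ℝ)) (hDopen : IsOpen D) (hDbdd : Bornology.IsBounded D)
    (DN : ℕ → Set (Fin d → ℝ)) (hmono : Monotone DN)
    (hDNopen : ∀ N, ∃ U : Set (Fin d → ℝ), IsOpen U ∧ DN N = U ∩ closure D)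
    (hcover : volume (closure D \ ⋃ N, DN N) = 0)
    (G : ℕ → Finset (Fin d → ℤ))
    (hG : ∀ N (p : Fin d → ℤ), p ∈ G N ↔ (fun i => (p i : ℝ) / (N : ℝ)) ∈ DN N)
    (Ξ : (Fin d → ℝ) → ℝ)
    (hmeas : Measurable Ξ) (h01 : ∀ z, Ξ z ∈ Set.Icc (0 : ℝ) 1)
    (hsupp : Function.support Ξ ⊆ Set.Icc (fun _ => (-1 : ℝ)) (fun _ => (1 : ℝ)))
    (hint : ∫ z : Fin d → ℝ, Ξ z = 1)
    (hpart : ∀ z : Fin d → ℝ, ∑' k : Fin d → ℤ, Ξ (fun i => z i - (k i : ℝ)) = 1)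
    (hsq : 1 / 2 < ∫ z : Fin d → ℝ, (Ξ z) ^ 2)
    (f g : (Fin d → ℝ) → ℝ)
    (hf : ContinuousOn f (closure D)) (hg : ContinuousOn g (closure D)) :
    Tendsto (fun N : ℕ => (N : ℝ) ^ d * ∑ p ∈ G N,
        (∫ z in D, Ξ (fun i => (N : ℝ) * z i - (p i : ℝ)) * f z) *
        (∫ z in D, Ξ (fun i => (N : ℝ) * z i - (p i : ℝ)) * g z))
      atTop (𝓝 (∫ z in D, f z * g z)) := by
  classical
  have hDmeas : MeasurableSet D := hDopen.measurableSet
  have hDc : IsCompact (closure D) := hDbdd.isCompact_closure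
  obtain ⟨C₀, hC₀⟩ := hDc.exists_bound_of_continuousOn hf
  obtain ⟨Cg₀, hCg₀⟩ := hDc.exists_bound_of_continuousOn hg
  set C : ℝ := max C₀ 0 with hCdef
  set Cg : ℝ := max Cg₀ 0 with hCgdef
  have hC : 0 ≤ C := le_max_right _ _
  have hCg : 0 ≤ Cg := le_max_right _ _
  have hfC : ∀ y ∈ closure D, |f y| ≤ C := fun y hy =>
    le_trans (by simpa [Real.norm_eq_abs] using hC₀ y hy) (le_max_left _ _)
  have hgC : ∀ y ∈ closure D, |g y| ≤ Cg := fun y hy =>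
    le_trans (by simpa [Real.norm_eq_abs] using hCg₀ y hy) (le_max_left _ _)
  -- the scaled bump functions
  set Φ : ℕ → (Fin d → ℤ) → (Fin d → ℝ) → ℝ :=
    fun N p y => Ξ (fun i => (N : ℝ) * y i - (p i : ℝ)) with hΦdef
  have hΦmeas : ∀ N p, Measurable (Φ N p) := by
    intro N p
    exact hmeas.comp (measurable_pi_lambda _ fun i =>
      ((measurable_pi_apply i).const_mul _).sub measurable_const)
  have hΦ0 : ∀ N p y, 0 ≤ Φ N p y := fun N p y => (h01 _).1
  have hΦ1 : ∀ N p y, Φ N p y ≤ 1 := fun N p y => (h01 _).2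
  -- Ξ is integrable
  have hΞint : Integrable Ξ := by
    by_contra h
    rw [integral_undef h] at hint
    norm_num at hint
  -- summability of the partition of unity
  have hsum : ∀ z : Fin d → ℝ, Summable (fun k : Fin d → ℤ => Ξ (fun i => z i - (k i : ℝ))) := by
    intro z
    by_contra h
    have h1 := hpart z
    rw [tsum_eq_zero_of_not_summable h] at h1
    norm_num at h1
  -- integrability of Φ
  have hΦint : ∀ (N : ℕ), 0 < N → ∀ p, Integrable (Φ N p) := by
    intro N hN p
    have hNR : (0:ℝ) < (N:ℝ) := by exact_mod_cast hN
    have h1 : ∀ y : Fin d → ℝ, (fun i => (N:ℝ) * y i - (p i:ℝ))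
        = ((N:ℝ) • y) - (fun i => (p i : ℝ)) := by
      intro y; ext i; simp [mul_comm]
    have : Φ N p = fun y => (fun x => Ξ (x - fun i => (p i:ℝ))) ((N:ℝ) • y) := by
      funext y; rw [hΦdef]; simp only [h1 y]
    rw [this]
    exact (integrable_comp_smul_iff volume (fun x => Ξ (x - fun i => (p i:ℝ)))
      (ne_of_gt hNR)).2 (hΞint.comp_sub_right _)
  -- scaling
  have hsc : ∀ (N : ℕ), 0 < N → ∀ p, ∫ y, Φ N p y = ((N : ℝ) ^ d)⁻¹ := by
    intro N hN p
    have hNR : (0:ℝ) < (N:ℝ) := by exact_mod_cast hN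
    have h1 : ∀ y : Fin d → ℝ, (fun i => (N:ℝ) * y i - (p i:ℝ))
        = ((N:ℝ) • y) - (fun i => (p i : ℝ)) := by
      intro y; ext i; simp [mul_comm]
    calc ∫ y, Φ N p y = ∫ y, (fun x => Ξ (x - fun i => (p i:ℝ))) ((N:ℝ) • y) := by
          simp only [hΦdef, h1]
      _ = ((N : ℝ) ^ d)⁻¹ := by
          rw [Measure.integral_comp_smul volume (fun x => Ξ (x - fun i => (p i:ℝ))) (N:ℝ)]
          rw [integral_sub_right_eq_self Ξ (fun i => ((p i : ℝ)))]
          rw [Module.finrank_pi, Fintype.card_fin, smul_eq_mul, hint, mul_one,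
            abs_of_nonneg (by positivity)]
  -- support estimate
  have hdist : ∀ (N : ℕ), 0 < N → ∀ (p : Fin d → ℤ) (y : Fin d → ℝ), Φ N p y ≠ 0 →
      dist y (fun i => (p i : ℝ) / (N : ℝ)) ≤ 1 / (N : ℝ) := by
    intro N hN p y hy
    have hNR : (0:ℝ) < (N:ℝ) := by exact_mod_cast hN
    have hmem : (fun i => (N:ℝ) * y i - (p i:ℝ)) ∈ Function.support Ξ := hy
    have hicc := hsupp hmem
    rw [Set.mem_Icc] at hicc
    rw [dist_pi_le_iff (by positivity)]
    intro i
    have h1 : -1 ≤ (N:ℝ) * y i - (p i:ℝ) := hicc.1 i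
    have h2 : (N:ℝ) * y i - (p i:ℝ) ≤ 1 := hicc.2 i
    show dist (y i) ((p i:ℝ)/(N:ℝ)) ≤ 1/(N:ℝ)
    have e : y i - (p i:ℝ)/(N:ℝ) = ((N:ℝ)*y i - (p i:ℝ))/(N:ℝ) := by field_simp
    calc dist (y i) ((p i:ℝ)/(N:ℝ)) = |(N:ℝ)*y i - (p i:ℝ)|/(N:ℝ) := by
          rw [Real.dist_eq, e, abs_div, abs_of_pos hNR]
      _ ≤ 1/(N:ℝ) := by gcongr; exact abs_le.2 ⟨h1, h2⟩
  -- the coefficients and the kernel approximation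
  set c : ℕ → (Fin d → ℤ) → ℝ := fun N p => ∫ y in D, Φ N p y * f y with hcdef
  set F : ℕ → (Fin d → ℝ) → ℝ :=
    fun N z => (N : ℝ) ^ d * ∑ p ∈ G N, c N p * Φ N p z with hFdef
  have hFmeas : ∀ N, Measurable (F N) := by
    intro N
    exact (Finset.measurable_sum _ fun p _ => (hΦmeas N p).const_mul _).const_mul _
  have hgm : AEStronglyMeasurable g (volume.restrict D) :=
    ((hg.mono subset_closure).aemeasurable hDmeas).aestronglyMeasurable
  have hgInt : ∀ N p, IntegrableOn (fun z => Φ N p z * g z) D := by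
    intro N p
    have hconst : IntegrableOn (fun _ => Cg) D volume :=
      integrableOn_const hDbdd.measure_lt_top.ne
    refine Integrable.mono' hconst
      ((hΦmeas N p).aestronglyMeasurable.mul hgm) ?_
    refine (ae_restrict_iff' hDmeas).2 (ae_of_all _ fun z hz => ?_)
    have h1 : ‖Φ N p z * g z‖ = Φ N p z * |g z| := by
      rw [norm_mul, Real.norm_eq_abs, abs_of_nonneg (hΦ0 N p z), Real.norm_eq_abs]
    rw [h1]
    calc Φ N p z * |g z| ≤ 1 * Cg :=
          mul_le_mul (hΦ1 N p z) (hgC z (subset_closure hz)) (abs_nonneg _) one_pos.le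
      _ = Cg := one_mul _
  -- step 1 : the sum is ∫_D F_N g
  have step1 : ∀ N : ℕ, (N : ℝ) ^ d * ∑ p ∈ G N,
      (∫ z in D, Φ N p z * f z) * (∫ z in D, Φ N p z * g z)
      = ∫ z in D, F N z * g z := by
    intro N
    have h1 : ∀ z, F N z * g z = (N : ℝ)^d * ∑ p ∈ G N, c N p * (Φ N p z * g z) := by
      intro z
      show ((N : ℝ)^d * ∑ p ∈ G N, c N p * Φ N p z) * g z = _
      rw [mul_assoc, Finset.sum_mul]
      simp only [mul_assoc]
    symm
    calc ∫ z in D, F N z * g z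
        = ∫ z in D, (N : ℝ)^d * ∑ p ∈ G N, c N p * (Φ N p z * g z) := by simp only [h1]
      _ = (N : ℝ)^d * ∫ z in D, ∑ p ∈ G N, c N p * (Φ N p z * g z) := by
          rw [MeasureTheory.integral_const_mul]
      _ = (N : ℝ)^d * ∑ p ∈ G N, ∫ z in D, c N p * (Φ N p z * g z) := by
          rw [integral_finset_sum _ (fun p _ => (hgInt N p).const_mul _)]
      _ = (N : ℝ)^d * ∑ p ∈ G N, c N p * ∫ z in D, Φ N p z * g z := by
          simp only [MeasureTheory.integral_const_mul]
  -- uniform bound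
  have hcbd : ∀ (N : ℕ), 0 < N → ∀ p, |c N p| ≤ C * ((N : ℝ)^d)⁻¹ := by
    intro N hN p
    calc |c N p| ≤ ∫ y in D, C * Φ N p y := by
          rw [← Real.norm_eq_abs]
          show ‖∫ y in D, Φ N p y * f y‖ ≤ ∫ y in D, C * Φ N p y
          refine norm_integral_le_of_norm_le ((hΦint N hN p).const_mul C).integrableOn ?_
          refine (ae_restrict_iff' hDmeas).2 (ae_of_all _ fun y hy => ?_)
          rw [Real.norm_eq_abs, abs_mul, abs_of_nonneg (hΦ0 N p y)]
          calc Φ N p y * |f y| ≤ Φ N p y * C :=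
                mul_le_mul_of_nonneg_left (hfC y (subset_closure hy)) (hΦ0 N p y)
            _ = C * Φ N p y := mul_comm _ _
      _ = C * ∫ y in D, Φ N p y := by rw [MeasureTheory.integral_const_mul]
      _ ≤ C * ((N : ℝ)^d)⁻¹ := by
          rw [← hsc N hN p]
          exact mul_le_mul_of_nonneg_left
            (setIntegral_le_integral (hΦint N hN p) (ae_of_all _ (hΦ0 N p))) hC
  have hsumle : ∀ (N : ℕ) (z : Fin d → ℝ), ∑ p ∈ G N, Φ N p z ≤ 1 := by
    intro N z
    have h2 : ∑ p ∈ G N, Φ N p z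
        ≤ ∑' k : Fin d → ℤ, Ξ (fun i => (fun j => (N : ℝ) * z j) i - (k i : ℝ)) :=
      Summable.sum_le_tsum (G N) (fun k _ => (h01 _).1) (hsum _)
    calc ∑ p ∈ G N, Φ N p z
        ≤ ∑' k : Fin d → ℤ, Ξ (fun i => (fun j => (N : ℝ) * z j) i - (k i : ℝ)) := h2
      _ = 1 := hpart _
  have hFbdd : ∀ (N : ℕ), 0 < N → ∀ z, |F N z| ≤ C := by
    intro N hN z
    have hNR : (0:ℝ) < (N:ℝ) := by exact_mod_cast hN
    have hNd : (0:ℝ) < (N:ℝ)^d := by positivity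
    have hb : ∀ p ∈ G N, |c N p * Φ N p z| ≤ (C * ((N : ℝ)^d)⁻¹) * Φ N p z := by
      intro p _
      rw [abs_mul, abs_of_nonneg (hΦ0 N p z)]
      exact mul_le_mul_of_nonneg_right (hcbd N hN p) (hΦ0 N p z)
    calc |F N z| = (N : ℝ)^d * |∑ p ∈ G N, c N p * Φ N p z| := by
          show |(N : ℝ)^d * ∑ p ∈ G N, c N p * Φ N p z| = _
          rw [abs_mul, abs_of_nonneg hNd.le]
      _ ≤ (N : ℝ)^d * ∑ p ∈ G N, |c N p * Φ N p z| :=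
          mul_le_mul_of_nonneg_left (Finset.abs_sum_le_sum_abs _ _) hNd.le
      _ ≤ (N : ℝ)^d * ∑ p ∈ G N, (C * ((N : ℝ)^d)⁻¹) * Φ N p z :=
          mul_le_mul_of_nonneg_left (Finset.sum_le_sum hb) hNd.le
      _ = C * ∑ p ∈ G N, Φ N p z := by
          rw [← Finset.mul_sum]
          field_simp
      _ ≤ C * 1 := mul_le_mul_of_nonneg_left (hsumle N z) hC
      _ = C := mul_one C
  -- pointwise convergence
  have hFconv : ∀ z ∈ D, z ∈ (⋃ N, DN N) → Tendsto (fun N => F N z) atTop (𝓝 (f z)) := by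
    intro z hzD hzU
    rw [Metric.tendsto_atTop]
    intro ε hε
    obtain ⟨M, hzM⟩ := Set.mem_iUnion.1 hzU
    obtain ⟨U, hUopen, hUeq⟩ := hDNopen M
    have hzU' : z ∈ U := (hUeq ▸ hzM).1
    have hcont : ContinuousAt f z :=
      (hf z (subset_closure hzD)).continuousAt (mem_nhds_iff.2 ⟨D, subset_closure, hDopen, hzD⟩)
    obtain ⟨δ₁, hδ₁, hδ₁f⟩ := Metric.continuousAt_iff.1 hcont (ε/2) (by linarith)
    obtain ⟨δ₂, hδ₂, hδ₂b⟩ := Metric.isOpen_iff.1 (hUopen.inter hDopen) z ⟨hzU', hzD⟩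
    set δ := min δ₁ δ₂ with hδdef
    have hδ : 0 < δ := lt_min hδ₁ hδ₂
    obtain ⟨N₁, hN₁⟩ := exists_nat_gt (2/δ)
    refine ⟨max M (N₁+1), fun N hN => ?_⟩
    have hNM : M ≤ N := le_trans (le_max_left _ _) hN
    have hNN₁ : (N₁:ℝ) < (N:ℝ) := by
      exact_mod_cast lt_of_lt_of_le (Nat.lt_succ_self _) (le_trans (le_max_right _ _) hN)
    have h2δ : 2/δ < (N:ℝ) := lt_trans hN₁ hNN₁
    have hNR : (0:ℝ) < (N:ℝ) := lt_of_le_of_lt (by positivity) h2δ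
    have hNpos : 0 < N := by exact_mod_cast hNR
    have hNd : (0:ℝ) < (N:ℝ)^d := by positivity
    have h2N : 2/(N:ℝ) < δ := by
      rw [div_lt_iff₀ hNR]
      rw [div_lt_iff₀ hδ] at h2δ
      nlinarith
    have h1N : 1/(N:ℝ) < δ := lt_of_le_of_lt (by gcongr <;> norm_num) h2N
    have hk1 : ∀ p : Fin d → ℤ, Φ N p z ≠ 0 → p ∈ G N := by
      intro p hp
      have hd1 : dist (fun i => (p i:ℝ)/(N:ℝ)) z ≤ 1/(N:ℝ) := by
        rw [dist_comm]; exact hdist N hNpos p z hp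
      have hmem : (fun i => (p i:ℝ)/(N:ℝ)) ∈ Metric.ball z δ₂ :=
        Metric.mem_ball.2 (lt_of_le_of_lt hd1 (lt_of_lt_of_le h1N (min_le_right _ _)))
      have hUD := hδ₂b hmem
      rw [hG]
      exact hmono hNM (hUeq ▸ ⟨hUD.1, subset_closure hUD.2⟩)
    have hk2 : ∀ p : Fin d → ℤ, Φ N p z ≠ 0 → ∀ y, Φ N p y ≠ 0 →
        y ∈ D ∧ |f y - f z| ≤ ε/2 := by
      intro p hp y hy
      have hdz : dist y z < δ := by
        calc dist y z ≤ dist y (fun i => (p i:ℝ)/(N:ℝ)) + dist (fun i => (p i:ℝ)/(N:ℝ)) z :=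
              dist_triangle _ _ _
          _ ≤ 1/(N:ℝ) + 1/(N:ℝ) :=
              add_le_add (hdist N hNpos p y hy) (by rw [dist_comm]; exact hdist N hNpos p z hp)
          _ = 2/(N:ℝ) := by ring
          _ < δ := h2N
      constructor
      · exact (hδ₂b (Metric.mem_ball.2 (lt_of_lt_of_le hdz (min_le_right _ _)))).2
      · have := hδ₁f (lt_of_lt_of_le hdz (min_le_left _ _))
        rw [Real.dist_eq] at this
        exact this.le
    have hk3 : ∑ p ∈ G N, Φ N p z = 1 := by
      have he : ∑' k : Fin d → ℤ, Ξ (fun i => (fun j => (N:ℝ)*z j) i - (k i:ℝ))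
          = ∑ p ∈ G N, Φ N p z :=
        tsum_eq_sum (fun p hp => of_not_not (fun h => hp (hk1 p h)))
      rw [← he, hpart]
    have hk4 : ∀ p : Fin d → ℤ, Φ N p z ≠ 0 → |(N:ℝ)^d * c N p - f z| ≤ ε/2 := by
      intro p hpz
      have hsupport : ∀ y, y ∉ D → Φ N p y * (D.indicator f) y = 0 := fun y hy => by
        rw [Set.indicator_of_notMem hy, mul_zero]
      have hc1 : c N p = ∫ y, Φ N p y * D.indicator f y := by
        show (∫ y in D, Φ N p y * f y) = _
        calc ∫ y in D, Φ N p y * f y = ∫ y in D, Φ N p y * D.indicator f y :=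
              setIntegral_congr_fun hDmeas (fun y hy => by rw [Set.indicator_of_mem hy])
          _ = ∫ y, Φ N p y * D.indicator f y :=
              setIntegral_eq_integral_of_forall_compl_eq_zero hsupport
      have hφint := hΦint N hNpos p
      have hfim : AEStronglyMeasurable (D.indicator f) volume :=
        ((aemeasurable_indicator_iff hDmeas).2
          ((hf.mono subset_closure).aemeasurable hDmeas)).aestronglyMeasurable
      have hindC : ∀ y, |D.indicator f y| ≤ C := by
        intro y
        by_cases hy : y ∈ D
        · rw [Set.indicator_of_mem hy]; exact hfC y (subset_closure hy)
        · rw [Set.indicator_of_notMem hy, abs_zero]; exact hC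
      have hint1 : Integrable (fun y => Φ N p y * D.indicator f y) := by
        refine Integrable.mono' (hφint.const_mul C)
          ((hΦmeas N p).aestronglyMeasurable.mul hfim) (ae_of_all _ fun y => ?_)
        rw [Real.norm_eq_abs, abs_mul, abs_of_nonneg (hΦ0 N p y)]
        calc Φ N p y * |D.indicator f y| ≤ Φ N p y * C :=
              mul_le_mul_of_nonneg_left (hindC y) (hΦ0 N p y)
          _ = C * Φ N p y := mul_comm _ _
      have hint2 : Integrable (fun y => Φ N p y * f z) := hφint.mul_const _
      have key : (N:ℝ)^d * c N p - f z = (N:ℝ)^d * ∫ y, Φ N p y * (D.indicator f y - f z) := by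
        rw [hc1]
        have h3 : ∫ y, Φ N p y * (D.indicator f y - f z)
            = (∫ y, Φ N p y * D.indicator f y) - ∫ y, Φ N p y * f z := by
          simp_rw [mul_sub]
          exact integral_sub hint1 hint2
        have h4 : ∫ y, Φ N p y * f z = ((N:ℝ)^d)⁻¹ * f z := by
          rw [MeasureTheory.integral_mul_const, hsc N hNpos p]
        rw [h3, h4]
        field_simp
      have hbound : |∫ y, Φ N p y * (D.indicator f y - f z)| ≤ (ε/2) * ((N:ℝ)^d)⁻¹ := by
        rw [← Real.norm_eq_abs]
        calc ‖∫ y, Φ N p y * (D.indicator f y - f z)‖ ≤ ∫ y, (ε/2) * Φ N p y := by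
              refine norm_integral_le_of_norm_le (hφint.const_mul _) (ae_of_all _ fun y => ?_)
              by_cases hy : Φ N p y = 0
              · simp [hy]
              · obtain ⟨hyD, hyf⟩ := hk2 p hpz y hy
                rw [Real.norm_eq_abs, abs_mul, abs_of_nonneg (hΦ0 N p y),
                  Set.indicator_of_mem hyD]
                calc Φ N p y * |f y - f z| ≤ Φ N p y * (ε/2) :=
                      mul_le_mul_of_nonneg_left hyf (hΦ0 N p y)
                  _ = (ε/2) * Φ N p y := mul_comm _ _
          _ = (ε/2) * ((N:ℝ)^d)⁻¹ := by rw [MeasureTheory.integral_const_mul, hsc N hNpos p]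
      rw [key, abs_mul, abs_of_nonneg hNd.le]
      calc (N:ℝ)^d * |∫ y, Φ N p y * (D.indicator f y - f z)|
          ≤ (N:ℝ)^d * ((ε/2) * ((N:ℝ)^d)⁻¹) := mul_le_mul_of_nonneg_left hbound hNd.le
        _ = ε/2 := by field_simp
    have hdiff : F N z - f z = ∑ p ∈ G N, Φ N p z * ((N:ℝ)^d * c N p - f z) := by
      have h5 : F N z = ∑ p ∈ G N, Φ N p z * ((N:ℝ)^d * c N p) := by
        show (N:ℝ)^d * ∑ p ∈ G N, c N p * Φ N p z = _
        rw [Finset.mul_sum]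
        exact Finset.sum_congr rfl (fun p _ => by ring)
      calc F N z - f z
          = ∑ p ∈ G N, Φ N p z * ((N:ℝ)^d * c N p) - (∑ p ∈ G N, Φ N p z) * f z := by
            rw [h5, hk3, one_mul]
        _ = ∑ p ∈ G N, (Φ N p z * ((N:ℝ)^d * c N p) - Φ N p z * f z) := by
            rw [Finset.sum_mul, ← Finset.sum_sub_distrib]
        _ = ∑ p ∈ G N, Φ N p z * ((N:ℝ)^d * c N p - f z) :=
            Finset.sum_congr rfl (fun p _ => by ring)
    have habs : |F N z - f z| ≤ ε/2 := by
      rw [hdiff]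
      calc |∑ p ∈ G N, Φ N p z * ((N:ℝ)^d * c N p - f z)|
          ≤ ∑ p ∈ G N, |Φ N p z * ((N:ℝ)^d * c N p - f z)| := Finset.abs_sum_le_sum_abs _ _
        _ ≤ ∑ p ∈ G N, Φ N p z * (ε/2) := by
            refine Finset.sum_le_sum (fun p hp => ?_)
            rw [abs_mul, abs_of_nonneg (hΦ0 N p z)]
            by_cases h : Φ N p z = 0
            · simp [h]
            · exact mul_le_mul_of_nonneg_left (hk4 p h) (hΦ0 N p z)
        _ = (∑ p ∈ G N, Φ N p z) * (ε/2) := (Finset.sum_mul _ _ _).symm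
        _ = ε/2 := by rw [hk3, one_mul]
    rw [Real.dist_eq]
    calc |F N z - f z| ≤ ε/2 := habs
      _ < ε := by linarith
  -- dominated convergence
  have main : Tendsto (fun N => ∫ z in D, F N z * g z) atTop (𝓝 (∫ z in D, f z * g z)) := by
    refine tendsto_integral_filter_of_dominated_convergence (fun _ => C * Cg) ?_ ?_ ?_ ?_
    · exact Eventually.of_forall fun N => (hFmeas N).aestronglyMeasurable.mul hgm
    · filter_upwards [eventually_gt_atTop 0] with N hN
      refine (ae_restrict_iff' hDmeas).2 (ae_of_all _ fun z hz => ?_)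
      rw [Real.norm_eq_abs, abs_mul]
      exact mul_le_mul (hFbdd N hN z) (hgC z (subset_closure hz)) (abs_nonneg _) hC
    · exact integrableOn_const hDbdd.measure_lt_top.ne
    · have h0 : (volume.restrict D) ((⋃ N, DN N)ᶜ) = 0 := by
        rw [Measure.restrict_apply' hDmeas]
        exact measure_mono_null (fun x hx => (Set.mem_diff _).2 ⟨subset_closure hx.2, hx.1⟩) hcover
      filter_upwards [ae_restrict_mem hDmeas, mem_ae_iff.2 h0] with z hz hz2
      exact (hFconv z hz hz2).mul_const (g z)
  refine Tendsto.congr (fun N => ?_) main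
  exact (step1 N).symm
end
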